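/- arXiv:1603.02177 — 7 statements merged into one kernel-verified Lean document; each statement's English description precedes it below -/
import Mathlib

section
/- Let G be a finite group in which |ab| = |a|·|b| whenever the elements a, b have coprime orders. Then G is nilpotent. -/
open Subgroup

section BW

variable {G : Type*} [Group G] [Finite G]

/-- Key counting step: multiplying by elements of a Sylow `p`-subgroup gives an
injection `P × S(d) ↪ S(p^v * d)` when `p ∤ d`. -/
lemma bw_key (h : ∀ a b : G, Nat.Coprime (orderOf a) (orderOf b) →
      orderOf (a * b) = orderOf a * orderOf b)
    {p : ℕ} [hp : Fact p.Prime] (P : Sylow p G) {d : ℕ} (hpd : ¬ p ∣ d) :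
    p ^ (Nat.card G).factorization p * Nat.card {x : G // x ^ d = 1}
      ≤ Nat.card {x : G // x ^ (p ^ (Nat.card G).factorization p * d) = 1} := by
  classical
  set v := (Nat.card G).factorization p with hv
  have hcardP : Nat.card P = p ^ v := P.card_eq_multiplicity
  have hcopvd : Nat.Coprime (p ^ v) d :=
    Nat.Coprime.pow_left _ ((Nat.Prime.coprime_iff_not_dvd hp.out).mpr hpd)
  have hordP : ∀ y : (P : Subgroup G), orderOf (y : G) ∣ p ^ v := by
    intro y
    rw [orderOf_coe, ← hcardP]
    exact orderOf_dvd_natCard y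
  have hcop : ∀ (y : (P : Subgroup G)) (x : G), x ^ d = 1 →
      Nat.Coprime (orderOf (y : G)) (orderOf x) := by
    intro y x hx
    exact Nat.Coprime.coprime_dvd_right (orderOf_dvd_of_pow_eq_one hx)
      (Nat.Coprime.coprime_dvd_left (hordP y) hcopvd)
  have hmem : ∀ (y : (P : Subgroup G)) (x : {x : G // x ^ d = 1}),
      ((y : G) * (x : G)) ^ (p ^ v * d) = 1 := by
    intro y x
    rw [← orderOf_dvd_iff_pow_eq_one, h _ _ (hcop y x x.2)]
    exact mul_dvd_mul (hordP y) (orderOf_dvd_of_pow_eq_one x.2)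
  let F : ↥(P : Subgroup G) × {x : G // x ^ d = 1} →
      {x : G // x ^ (p ^ v * d) = 1} := fun z => ⟨(z.1 : G) * (z.2 : G), hmem z.1 z.2⟩
  have hF : Function.Injective F := by
    rintro ⟨y₁, x₁⟩ ⟨y₂, x₂⟩ heq
    have heq' : (y₁ : G) * (x₁ : G) = (y₂ : G) * (x₂ : G) := congrArg Subtype.val heq
    set g : (P : Subgroup G) := y₂⁻¹ * y₁ with hg
    have hgx : (g : G) * (x₁ : G) = (x₂ : G) := by
      push_cast [hg]
      rw [mul_assoc, heq', ← mul_assoc, inv_mul_cancel, one_mul]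
    have hcopg : Nat.Coprime (orderOf (g : G)) (orderOf (x₁ : G)) := hcop g x₁ x₁.2
    have hdvd2 : orderOf (g : G) ∣ d := by
      have : orderOf ((g : G) * (x₁ : G)) = orderOf (g : G) * orderOf (x₁ : G) :=
        h _ _ hcopg
      rw [hgx] at this
      exact dvd_trans (Dvd.intro _ (this.symm)) (orderOf_dvd_of_pow_eq_one x₂.2)
    have hdvd1 : orderOf (g : G) ∣ p ^ v := hordP g
    have hg1 : orderOf (g : G) = 1 :=
      (Nat.coprime_self _).mp
        ((Nat.Coprime.coprime_dvd_left hdvd1 hcopvd).coprime_dvd_right hdvd2)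
    have hgone : (g : G) = 1 := orderOf_eq_one_iff.mp hg1
    have hy : y₁ = y₂ := by
      have hgg : g = 1 := Subtype.ext hgone
      rw [hg] at hgg
      exact (inv_mul_eq_one.mp hgg).symm
    have hx : x₁ = x₂ := by
      apply Subtype.ext
      have := hgx
      rw [hgone, one_mul] at this
      exact this
    simp [hy, hx]
  calc p ^ v * Nat.card {x : G // x ^ d = 1}
      = Nat.card (↥(P : Subgroup G) × {x : G // x ^ d = 1}) := by
        rw [Nat.card_prod, hcardP]
    _ ≤ Nat.card {x : G // x ^ (p ^ v * d) = 1} := Nat.card_le_card_of_injective F hF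

lemma bw_count (h : ∀ a b : G, Nat.Coprime (orderOf a) (orderOf b) →
      orderOf (a * b) = orderOf a * orderOf b) :
    ∀ t : Finset ℕ, t ⊆ (Nat.card G).primeFactors →
    Nat.card {x : G // x ^ (∏ q ∈ (Nat.card G).primeFactors \ t,
        q ^ (Nat.card G).factorization q) = 1}
      ≤ ∏ q ∈ (Nat.card G).primeFactors \ t, q ^ (Nat.card G).factorization q := by
  classical
  intro t
  induction t using Finset.induction_on with
  | empty =>
    intro _
    rw [Finset.sdiff_empty]
    have hN : Nat.card G ≠ 0 := Nat.card_pos.ne'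
    have hprod : ∏ q ∈ (Nat.card G).primeFactors, q ^ (Nat.card G).factorization q
        = Nat.card G := by
      rw [← Nat.support_factorization]
      exact Nat.factorization_prod_pow_eq_self hN
    rw [hprod]
    exact Nat.card_le_card_of_injective Subtype.val Subtype.val_injective
  | @insert q t hq ih =>
    intro hsub
    have hqpf : q ∈ (Nat.card G).primeFactors := hsub (Finset.mem_insert_self q t)
    have hqprime : q.Prime := Nat.prime_of_mem_primeFactors hqpf
    haveI : Fact q.Prime := ⟨hqprime⟩
    have hqt : q ∉ t := hq
    set pf := (Nat.card G).primeFactors with hpf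
    have hs : pf \ t = insert q (pf \ insert q t) := by
      ext r
      simp only [Finset.mem_sdiff, Finset.mem_insert]
      constructor
      · rintro ⟨hr, hrt⟩
        by_cases hrq : r = q
        · exact Or.inl hrq
        · exact Or.inr ⟨hr, fun hc => hc.elim hrq hrt⟩
      · rintro (rfl | ⟨hr, hrt⟩)
        · exact ⟨hqpf, hqt⟩
        · exact ⟨hr, fun hc => hrt (Or.inr hc)⟩
    have hqnot : q ∉ pf \ insert q t := fun hc =>
      (Finset.mem_sdiff.mp hc).2 (Finset.mem_insert_self q t)
    set d := ∏ r ∈ pf \ insert q t, r ^ (Nat.card G).factorization r with hd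
    have hcoprime : Nat.Coprime q d := by
      apply Nat.Coprime.prod_right
      intro r hr
      have hrpf : r ∈ pf := (Finset.mem_sdiff.mp hr).1
      have hrprime : r.Prime := Nat.prime_of_mem_primeFactors hrpf
      have hrq : q ≠ r := fun hc => hqnot (hc ▸ hr)
      exact Nat.Coprime.pow_right _ ((Nat.coprime_primes hqprime hrprime).mpr hrq)
    have hpd : ¬ q ∣ d := (Nat.Prime.coprime_iff_not_dvd hqprime).mp hcoprime
    obtain ⟨P⟩ : Nonempty (Sylow q G) := inferInstance
    have hkey := bw_key h P hpd
    have hprodins : ∏ r ∈ pf \ t, r ^ (Nat.card G).factorization r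
        = q ^ (Nat.card G).factorization q * d := by
      rw [hs, Finset.prod_insert hqnot]
    have hih := ih (Finset.Subset.trans (Finset.subset_insert q t) hsub)
    rw [hprodins] at hih
    have hchain : q ^ (Nat.card G).factorization q * Nat.card {x : G // x ^ d = 1}
        ≤ q ^ (Nat.card G).factorization q * d := le_trans hkey hih
    exact Nat.le_of_mul_le_mul_left hchain (pow_pos hqprime.pos _)

end BW

theorem baumslag_wiegold (G : Type*) [Group G] [Finite G]
    (h : ∀ a b : G, Nat.Coprime (orderOf a) (orderOf b) →
      orderOf (a * b) = orderOf a * orderOf b) :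
    Group.IsNilpotent G := by
  classical
  refine ((isNilpotent_of_finite_tfae (G := G)).out 0 3).mpr ?_
  intro p hp P
  set v := (Nat.card G).factorization p with hv
  -- the set of solutions of x ^ p ^ v = 1 has at most p ^ v elements
  have hS : Nat.card {x : G // x ^ (p ^ v) = 1} ≤ p ^ v := by
    have hcount := bw_count h ((Nat.card G).primeFactors \ {p}) Finset.sdiff_subset
    have hsd : (Nat.card G).primeFactors \ ((Nat.card G).primeFactors \ {p})
        = (Nat.card G).primeFactors ∩ {p} := Finset.sdiff_sdiff_self_left _ _
    rw [hsd] at hcount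
    by_cases hppf : p ∈ (Nat.card G).primeFactors
    · have : (Nat.card G).primeFactors ∩ {p} = {p} := by
        rw [Finset.inter_comm]
        exact Finset.singleton_inter_of_mem hppf
      rw [this, Finset.prod_singleton] at hcount
      exact hcount
    · have h1 : (Nat.card G).primeFactors ∩ {p} = ∅ := by
        rw [Finset.inter_comm]
        exact Finset.singleton_inter_of_notMem hppf
      have h2 : v = 0 := by
        have hppf' := hppf
        rw [← Nat.support_factorization] at hppf'
        exact Finsupp.notMem_support_iff.mp hppf'
      rw [h1, Finset.prod_empty] at hcount
      rw [h2, pow_zero]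
      exact hcount
  -- every Sylow p-subgroup equals the solution set
  have hsylset : ∀ Q : Sylow p G, ((Q : Subgroup G) : Set G) = {x : G | x ^ (p ^ v) = 1} := by
    intro Q
    have hsub : ((Q : Subgroup G) : Set G) ⊆ {x : G | x ^ (p ^ v) = 1} := by
      intro y hy
      have : orderOf (⟨y, hy⟩ : (Q : Subgroup G)) ∣ Nat.card (Q : Subgroup G) :=
        orderOf_dvd_natCard _
      rw [Q.card_eq_multiplicity] at this
      have : orderOf y ∣ p ^ v := by rwa [orderOf_mk] at this
      exact orderOf_dvd_iff_pow_eq_one.mp this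
    have hcards : {x : G | x ^ (p ^ v) = 1}.ncard ≤ ((Q : Subgroup G) : Set G).ncard := by
      rw [← Nat.card_coe_set_eq, ← Nat.card_coe_set_eq]
      have e1 : Nat.card {x : G | x ^ (p ^ v) = 1} = Nat.card {x : G // x ^ (p ^ v) = 1} := rfl
      have e2 : Nat.card ((Q : Subgroup G) : Set G) = Nat.card (Q : Subgroup G) := rfl
      rw [e1, e2, Q.card_eq_multiplicity]
      exact hS
    exact Set.eq_of_subset_of_ncard_le hsub hcards (Set.toFinite _)
  -- hence the Sylow p-subgroup is unique
  have huniq : ∀ Q R : Sylow p G, Q = R := by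
    intro Q R
    apply Sylow.ext
    apply SetLike.ext'
    rw [hsylset Q, hsylset R]
  -- uniqueness implies normality
  have hnorm : ∀ g : G, g • P = P := fun g => huniq _ _
  exact Subgroup.normalizer_eq_top_iff.mp
    (top_le_iff.mp fun g _ => Sylow.smul_eq_iff_mem_normalizer.mp (hnorm g))
end

section
/- Let G be a finite group in which |ab| = |a|·|b| whenever a and b are commutators of coprime orders. Let x be a commutator in G and let N be a subgroup of G normalized by x with gcd(|x|, |N|) = 1. Then [x, N] = 1, i.e., x centralizes N. -/
open scoped commutatorElement

theorem commutator_centralizes_coprime_normalized (G : Type*) [Group G] [Finite G]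
    (h : ∀ a b : G, (∃ x y : G, a = ⁅x, y⁆) → (∃ x y : G, b = ⁅x, y⁆) →
      Nat.Coprime (orderOf a) (orderOf b) →
      orderOf (a * b) = orderOf a * orderOf b)
    (x : G) (hx : ∃ u v : G, x = ⁅u, v⁆)
    (N : Subgroup G) (hnorm : x ∈ Subgroup.normalizer (N : Set G))
    (hcop : Nat.Coprime (orderOf x) (Nat.card N)) :
    ∀ n ∈ N, x * n = n * x := by
  intro n hn
  set c : G := ⁅x⁻¹, n⁆ with hc
  have hcN : c ∈ N := by
    have h1 : x⁻¹ * n * x ∈ N := by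
      have := (Subgroup.mem_normalizer_iff.mp (inv_mem hnorm)) n
      simpa using this.mp hn
    have : (x⁻¹ * n * x) * n⁻¹ ∈ N := mul_mem h1 (inv_mem hn)
    simpa [hc, commutatorElement_def, mul_assoc] using this
  have hordc : orderOf c ∣ Nat.card N := by
    have := orderOf_dvd_natCard (⟨c, hcN⟩ : N)
    rwa [← orderOf_submonoid ⟨c, hcN⟩] at this
  have hcopc : Nat.Coprime (orderOf x) (orderOf c) :=
    Nat.Coprime.coprime_dvd_right hordc hcop
  have hxc : x * c = n * x * n⁻¹ := by
    simp [hc, commutatorElement_def, mul_assoc]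
  have hconj : orderOf (n * x * n⁻¹) = orderOf x := by
    have := orderOf_injective (MulAut.conj n).toMonoidHom
      (MulEquiv.injective _) x
    simpa [MulAut.conj] using this
  have key := h x c hx ⟨x⁻¹, n, rfl⟩ hcopc
  rw [hxc, hconj] at key
  have hxpos : 0 < orderOf x := orderOf_pos x
  have : orderOf c = 1 := by
    nlinarith [orderOf_pos c]
  have hc1 : c = 1 := orderOf_eq_one_iff.mp this
  have : x⁻¹ * n * x * n⁻¹ = 1 := by
    simpa [hc, commutatorElement_def, mul_assoc] using hc1
  have := congrArg (fun g => x * (g * n)) this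
  simpa [mul_assoc] using this.symm
end

section
/- Let G be a finite group in which |ab| = |a|·|b| whenever a and b are commutators of coprime orders. If G is soluble, then G' is nilpotent. -/
set_option linter.unusedSectionVars false

open scoped commutatorElement

open Subgroup MulAction Function

open Subgroup

section KeyLemma
variable {G : Type*} [Group G] [Finite G]

/-- The key consequence of the order hypothesis: a commutator `c` commutes with any `w`
as soon as `⁅w⁻¹, c⁻¹⁆` has order coprime to that of `c`. -/
theorem key_comm
    (h : ∀ a b : G, (∃ x y : G, a = ⁅x, y⁆) → (∃ x y : G, b = ⁅x, y⁆) →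
      Nat.Coprime (orderOf a) (orderOf b) →
      orderOf (a * b) = orderOf a * orderOf b)
    {c w : G} (hc : ∃ x y : G, c = ⁅x, y⁆)
    (hcop : Nat.Coprime (orderOf (w⁻¹ * c⁻¹ * w * c)) (orderOf c)) :
    w⁻¹ * c⁻¹ * w * c = 1 := by
  set u : G := w⁻¹ * c⁻¹ * w * c with hu
  have hu_comm : ∃ x y : G, u = ⁅x, y⁆ := ⟨w⁻¹, c⁻¹, by
    simp [commutatorElement_def, hu, mul_assoc]⟩
  have hcinv : ∃ x y : G, c⁻¹ = ⁅x, y⁆ := by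
    obtain ⟨x, y, rfl⟩ := hc
    exact ⟨y, x, (commutatorElement_inv x y)⟩
  have h1 : orderOf (u * c⁻¹) = orderOf u * orderOf c⁻¹ :=
    h u c⁻¹ hu_comm hcinv (by rwa [orderOf_inv])
  have h2 : u * c⁻¹ = w⁻¹ * c⁻¹ * w := by rw [hu]; group
  have h3 : orderOf (w⁻¹ * c⁻¹ * w) = orderOf c⁻¹ := by
    have : SemiconjBy w⁻¹ c⁻¹ (w⁻¹ * c⁻¹ * w) := by
      unfold SemiconjBy; group
    exact (SemiconjBy.orderOf_eq w⁻¹ this).symm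
  rw [h2, h3] at h1
  have hpos : 0 < orderOf c⁻¹ := orderOf_pos _
  have : orderOf u = 1 := by nlinarith [h1, hpos]
  simpa [orderOf_eq_one_iff] using this

end KeyLemma


section Focal
variable {G : Type*} [Group G] [Finite G]

theorem closure_normal_of_conj {S : Set G} (hS : ∀ s ∈ S, ∀ g : G, g * s * g⁻¹ ∈ S) :
    (Subgroup.closure S).Normal := by
  constructor
  intro n hn g
  induction hn using Subgroup.closure_induction with
  | mem x hx => exact subset_closure (hS x hx g)
  | one => simpa using one_mem _
  | mul x y hx hy hx' hy' =>
      have : g * (x * y) * g⁻¹ = (g * x * g⁻¹) * (g * y * g⁻¹) := by group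
      rw [this]; exact mul_mem hx' hy'
  | inv x hx hx' =>
      have : g * x⁻¹ * g⁻¹ = (g * x * g⁻¹)⁻¹ := by group
      rw [this]; exact inv_mem hx'

variable (q : ℕ)

/-- The subgroup generated by commutators of `q`-power order. -/
def commClosure (G : Type*) [Group G] (q : ℕ) : Subgroup G :=
  Subgroup.closure {c : G | (∃ x y : G, c = ⁅x, y⁆) ∧ ∃ k : ℕ, orderOf c = q ^ k}

/-- The focal-type subgroup of `P`: generated by differences of `G`-conjugate elements of `P`. -/
def focalD (P : Subgroup G) : Subgroup ↥P :=
  Subgroup.closure {z : ↥P | ∃ (x : ↥P) (g : G), (z : G) = (x : G)⁻¹ * (g⁻¹ * x * g)}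

instance focalD_normal (P : Subgroup G) : (focalD P).Normal := by
  apply closure_normal_of_conj
  rintro s ⟨x, g, hz⟩ b
  refine ⟨b * x * b⁻¹, (b : G) * g * (b : G)⁻¹, ?_⟩
  push_cast [hz]
  group

theorem commutator_mem_focalD (P : Subgroup G) (a b : ↥P) : ⁅a, b⁆ ∈ focalD P := by
  refine subset_closure ⟨a⁻¹, (b : G)⁻¹, ?_⟩
  push_cast [commutatorElement_def]
  group

noncomputable instance focalCG (P : Subgroup G) : CommGroup (↥P ⧸ focalD P) :=
  { (inferInstance : Group (↥P ⧸ focalD P)) with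
    mul_comm := by
      intro a b
      refine QuotientGroup.induction_on a fun x => QuotientGroup.induction_on b fun y => ?_
      rw [← QuotientGroup.mk_mul, ← QuotientGroup.mk_mul]
      refine (QuotientGroup.eq ..).mpr ?_
      have : (x * y)⁻¹ * (y * x) = ⁅y⁻¹, x⁻¹⁆ := by
        rw [commutatorElement_def]; group
      rw [this]
      exact commutator_mem_focalD P y⁻¹ x⁻¹ }

end Focal

section Transfer
variable {G : Type*} [Group G] [Finite G]

theorem transfer_focal (P : Subgroup G) (g : G) (hg : g ∈ P) :
    MonoidHom.transfer (QuotientGroup.mk' (focalD P)) g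
      = QuotientGroup.mk' (focalD P) ⟨g, hg⟩ ^ P.index := by
  classical
  letI := P.fintypeQuotientOfFiniteIndex
  rw [MonoidHom.transfer_eq_prod_quotient_orbitRel_zpowers_quot]
  have key : ∀ (k : ℕ) (t : G) (ht : t⁻¹ * g ^ k * t ∈ P),
      QuotientGroup.mk' (focalD P) ⟨t⁻¹ * g ^ k * t, ht⟩
        = QuotientGroup.mk' (focalD P) ⟨g, hg⟩ ^ k := by
    intro k t ht
    rw [← map_pow]
    have hpow : (⟨g, hg⟩ : ↥P) ^ k = ⟨g ^ k, pow_mem hg k⟩ := by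
      ext; simp
    rw [hpow]
    symm
    refine (QuotientGroup.eq ..).mpr ?_
    exact subset_closure ⟨⟨g ^ k, pow_mem hg k⟩, t, by push_cast; group⟩
  calc (∏ q' : Quotient (orbitRel (Subgroup.zpowers g) (G ⧸ P)),
          QuotientGroup.mk' (focalD P)
            ⟨q'.out.out⁻¹ * g ^ Function.minimalPeriod (g • ·) q'.out * q'.out.out, _⟩)
      = ∏ q' : Quotient (orbitRel (Subgroup.zpowers g) (G ⧸ P)),
          QuotientGroup.mk' (focalD P) ⟨g, hg⟩ ^ Function.minimalPeriod (g • ·) q'.out :=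
        Finset.prod_congr rfl fun q' _ => key _ _ _
    _ = QuotientGroup.mk' (focalD P) ⟨g, hg⟩
          ^ ∑ q' : Quotient (orbitRel (Subgroup.zpowers g) (G ⧸ P)),
              Function.minimalPeriod (g • ·) q'.out := Finset.prod_pow_eq_pow_sum _ _ _
    _ = QuotientGroup.mk' (focalD P) ⟨g, hg⟩ ^ P.index := by
        congr 1
        simp_rw [MulAction.minimalPeriod_eq_card]
        rw [← Fintype.card_sigma]
        erw [← Fintype.card_congr (MulAction.selfEquivSigmaOrbits (Subgroup.zpowers g) (G ⧸ P)),
          ]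
        rw [Subgroup.index_eq_card, Nat.card_eq_fintype_card]

end Transfer

section FocalLite
variable {G : Type*} [Group G] [Finite G]

theorem mem_commClosure {q : ℕ} [Fact q.Prime] {x : G} (hxK : x ∈ commutator G)
    (hq : ∃ k : ℕ, orderOf x = q ^ k) : x ∈ commClosure G q := by
  classical
  -- x lies in some Sylow q-subgroup
  obtain ⟨k, hk⟩ := hq
  have hzp : IsPGroup q (Subgroup.zpowers x) := by
    refine IsPGroup.of_card (n := k) ?_
    rw [Nat.card_zpowers, hk]
  obtain ⟨P, hP⟩ := hzp.exists_le_sylow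
  have hxP : x ∈ (P : Subgroup G) := hP (Subgroup.mem_zpowers x)
  set D := focalD (P : Subgroup G)
  set ϕ := QuotientGroup.mk' D
  -- the transfer kills the commutator subgroup
  have hker : commutator G ≤ (MonoidHom.transfer ϕ).ker := by
    rw [commutator_def]
    rw [Subgroup.commutator_le]
    intro a _ b _
    rw [MonoidHom.mem_ker, map_commutatorElement]
    exact commutatorElement_eq_one_iff_commute.mpr (mul_comm _ _)
  have h1 : ϕ ⟨x, hxP⟩ ^ (P : Subgroup G).index = 1 := by
    rw [← transfer_focal (P : Subgroup G) x hxP]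
    exact hker hxK
  -- the quotient is a q-group, and q does not divide the index
  have hpq : IsPGroup q (↥(P : Subgroup G) ⧸ D) := P.isPGroup'.to_quotient D
  obtain ⟨m, hm⟩ := hpq (ϕ ⟨x, hxP⟩)
  obtain ⟨j, _, hj⟩ := (Nat.dvd_prime_pow (Fact.out : q.Prime)).mp (orderOf_dvd_of_pow_eq_one hm)
  have hdvd : orderOf (ϕ ⟨x, hxP⟩) ∣ (P : Subgroup G).index := orderOf_dvd_of_pow_eq_one h1
  have hj0 : j = 0 := by
    by_contra hj0
    have : q ∣ (P : Subgroup G).index := by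
      refine dvd_trans ?_ hdvd
      rw [hj]
      exact dvd_pow_self q hj0
    exact P.not_dvd_index this
  have hone : ϕ ⟨x, hxP⟩ = 1 := by
    have : orderOf (ϕ ⟨x, hxP⟩) = 1 := by rw [hj, hj0, pow_zero]
    exact orderOf_eq_one_iff.mp this
  have hmemD : (⟨x, hxP⟩ : ↥(P : Subgroup G)) ∈ D := by
    rwa [← QuotientGroup.ker_mk' D, MonoidHom.mem_ker]
  -- push D into commClosure
  have hDle : D ≤ (commClosure G q).comap (P : Subgroup G).subtype := by
    rw [show D = focalD (P : Subgroup G) from rfl, focalD, Subgroup.closure_le]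
    rintro z ⟨x₀, g₀, hz⟩
    simp only [SetLike.mem_coe, Subgroup.mem_comap, Subgroup.coe_subtype]
    refine subset_closure ⟨⟨(x₀ : G)⁻¹, g₀⁻¹, by rw [hz, commutatorElement_def]; group⟩, ?_⟩
    obtain ⟨m, hm⟩ := P.isPGroup' z
    obtain ⟨j', _, hj'⟩ := (Nat.dvd_prime_pow (Fact.out : q.Prime)).mp (orderOf_dvd_of_pow_eq_one hm)
    exact ⟨j', by rw [← Subgroup.orderOf_coe] at hj'; exact hj'⟩
  exact hDle hmemD

end FocalLite

section Wsub
variable {G : Type*} [Group G] [Finite G]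

/-- Subgroup generated by the `p`-elements of `N`. -/
def Wsub (p : ℕ) (N : Subgroup G) : Subgroup G :=
  Subgroup.closure {g : G | g ∈ N ∧ ∃ k : ℕ, orderOf g = p ^ k}

theorem Wsub_le (p : ℕ) (N : Subgroup G) : Wsub p N ≤ N := by
  rw [Wsub, Subgroup.closure_le]
  rintro g ⟨hg, -⟩
  exact hg

theorem Wsub_normal (p : ℕ) (N : Subgroup G) [N.Normal] : (Wsub p N).Normal := by
  apply closure_normal_of_conj
  rintro s ⟨hs, k, hk⟩ g
  refine ⟨‹N.Normal›.conj_mem s hs g, k, ?_⟩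
  rw [← hk]
  exact (SemiconjBy.orderOf_eq g (by unfold SemiconjBy; group)).symm

theorem mem_Wsub (p : ℕ) (N : Subgroup G) {g : G} (hg : g ∈ N) (hk : ∃ k : ℕ, orderOf g = p ^ k) :
    g ∈ Wsub p N := subset_closure ⟨hg, hk⟩

/-- If `N` is nilpotent, the subgroup generated by its `p`-elements is a `p`-group. -/
theorem Wsub_pgroup (p : ℕ) [Fact p.Prime] (N : Subgroup G)
    (hN : Group.IsNilpotent ↥N) : IsPGroup p ↥(Wsub p N) := by
  classical
  obtain ⟨Sy⟩ : Nonempty (Sylow p ↥N) := inferInstance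
  have htfae : ∀ (r : ℕ) (_ : Fact r.Prime) (P : Sylow r ↥N), (P : Subgroup ↥N).Normal :=
    ((isNilpotent_of_finite_tfae (G := ↥N)).out 0 3).mp hN
  haveI hSyN : (Sy : Subgroup ↥N).Normal := htfae p ‹_› Sy
  -- every p-element of N is in Sy
  have hle : Wsub p N ≤ (Sy : Subgroup ↥N).map N.subtype := by
    rw [Wsub, Subgroup.closure_le]
    rintro g ⟨hgN, k, hk⟩
    have h1 : ((⟨g, hgN⟩ : ↥N) : G) = g := rfl
    have hordg : orderOf (⟨g, hgN⟩ : ↥N) = p ^ k := by rw [Subgroup.orderOf_mk, hk]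
    have hmk : ((⟨g, hgN⟩ : ↥N) : ↥N ⧸ (Sy : Subgroup ↥N)) = 1 := by
      have hdvd1 : orderOf ((⟨g, hgN⟩ : ↥N) : ↥N ⧸ (Sy : Subgroup ↥N)) ∣ p ^ k := by
        refine dvd_trans (orderOf_map_dvd (QuotientGroup.mk' (Sy : Subgroup ↥N)) _) ?_
        rw [hordg]
      obtain ⟨j, _, hj⟩ := (Nat.dvd_prime_pow (Fact.out : p.Prime)).mp hdvd1
      have hdvd2 : orderOf ((⟨g, hgN⟩ : ↥N) : ↥N ⧸ (Sy : Subgroup ↥N)) ∣ (Sy : Subgroup ↥N).index := by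
        rw [Subgroup.index_eq_card]
        exact orderOf_dvd_natCard _
      have hj0 : j = 0 := by
        by_contra hj0
        refine Sy.not_dvd_index (dvd_trans ?_ hdvd2)
        rw [hj]
        exact dvd_pow_self p hj0
      apply orderOf_eq_one_iff.mp
      rw [hj, hj0, pow_zero]
    have : (⟨g, hgN⟩ : ↥N) ∈ (Sy : Subgroup ↥N) := (QuotientGroup.eq_one_iff _).mp hmk
    exact ⟨⟨g, hgN⟩, this, rfl⟩
  have : IsPGroup p ↥((Sy : Subgroup ↥N).map N.subtype) := Sy.isPGroup'.map _
  exact this.to_le hle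

end Wsub

section Centralizer
variable {G : Type*} [Group G] [Finite G]

theorem commClosure_le_centralizer
    (h : ∀ a b : G, (∃ x y : G, a = ⁅x, y⁆) → (∃ x y : G, b = ⁅x, y⁆) →
      Nat.Coprime (orderOf a) (orderOf b) →
      orderOf (a * b) = orderOf a * orderOf b)
    {p q : ℕ} [Fact p.Prime] [Fact q.Prime] (hpq : p ≠ q)
    (N : Subgroup G) [N.Normal] (hN : Group.IsNilpotent ↥N) :
    commClosure G q ≤ Subgroup.centralizer (Wsub p N : Set G) := by
  rw [commClosure, Subgroup.closure_le]
  rintro c ⟨hcComm, i, hi⟩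
  rw [SetLike.mem_coe, Subgroup.mem_centralizer_iff]
  intro w hw
  haveI := Wsub_normal p N
  have hu_mem : w⁻¹ * c⁻¹ * w * c ∈ Wsub p N := by
    have h1 : c⁻¹ * w * c ∈ Wsub p N := by
      have := ‹(Wsub p N).Normal›.conj_mem w hw c⁻¹
      simpa using this
    have := Subgroup.mul_mem _ (Subgroup.inv_mem _ hw) h1
    simpa [mul_assoc] using this
  obtain ⟨m, hm⟩ := Wsub_pgroup p N hN ⟨_, hu_mem⟩
  have hdvd : orderOf (w⁻¹ * c⁻¹ * w * c) ∣ p ^ m := by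
    rw [← Subgroup.orderOf_mk _ hu_mem]
    exact orderOf_dvd_of_pow_eq_one hm
  obtain ⟨j, _, hj⟩ := (Nat.dvd_prime_pow (Fact.out : p.Prime)).mp hdvd
  have hcop : Nat.Coprime (orderOf (w⁻¹ * c⁻¹ * w * c)) (orderOf c) := by
    rw [hj, hi]
    exact Nat.Coprime.pow _ _ ((Nat.coprime_primes (Fact.out : p.Prime) (Fact.out : q.Prime)).mpr hpq)
  have hu1 : w⁻¹ * c⁻¹ * w * c = 1 := key_comm h hcComm hcop
  have h3 : c⁻¹ * w * c = w := by
    calc c⁻¹ * w * c = w * (w⁻¹ * c⁻¹ * w * c) := by group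
      _ = w := by rw [hu1, mul_one]
  calc w * c = c * (c⁻¹ * w * c) := by group
    _ = c * w := by rw [h3]

end Centralizer

section Endgame
variable {G : Type*} [Group G] [Finite G]

theorem sylow_normal_in_commutator
    (h : ∀ a b : G, (∃ x y : G, a = ⁅x, y⁆) → (∃ x y : G, b = ⁅x, y⁆) →
      Nat.Coprime (orderOf a) (orderOf b) →
      orderOf (a * b) = orderOf a * orderOf b)
    (hNGnil : Group.IsNilpotent ↥(⁅commutator G, commutator G⁆))
    (q : ℕ) [Fact q.Prime] (Q : Sylow q ↥(commutator G)) :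
    (Q : Subgroup ↥(commutator G)).Normal := by
  classical
  set NG : Subgroup G := ⁅commutator G, commutator G⁆ with hNGdef
  have hNGK : NG ≤ commutator G := Subgroup.commutator_le_left _ _
  set Qimg : Subgroup G := (Q : Subgroup ↥(commutator G)).map (commutator G).subtype with hQdef
  have hQimgK : Qimg ≤ commutator G := by
    rintro x ⟨x', _, rfl⟩
    exact x'.2
  -- every element of Qimg is in the closure of q-power-order commutators
  have hxQ : ∀ x ∈ Qimg, x ∈ commClosure G q := by
    rintro x ⟨x', hx', rfl⟩
    refine mem_commClosure x'.2 ?_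
    obtain ⟨m, hm⟩ := Q.isPGroup' ⟨x', hx'⟩
    have : orderOf x' ∣ q ^ m := by
      rw [← Subgroup.orderOf_mk _ hx']
      exact orderOf_dvd_of_pow_eq_one hm
    obtain ⟨j, _, hj⟩ := (Nat.dvd_prime_pow (Fact.out : q.Prime)).mp this
    exact ⟨j, by rw [show (commutator G).subtype x' = (x' : G) from rfl, Subgroup.orderOf_coe, hj]⟩
  -- the q-part of NG is inside Qimg
  have hWq : Wsub q NG ≤ Qimg := by
    have hWqK : Wsub q NG ≤ commutator G := (Wsub_le q NG).trans hNGK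
    haveI hWnorm : (Wsub q NG).Normal := Wsub_normal q NG
    set W' : Subgroup ↥(commutator G) := (Wsub q NG).subgroupOf (commutator G) with hW'def
    haveI hW'norm : W'.Normal := by
      constructor
      intro n hn g
      rw [hW'def, Subgroup.mem_subgroupOf] at hn ⊢
      simpa using hWnorm.conj_mem _ hn (g : G)
    have hW'p : IsPGroup q ↥W' :=
      IsPGroup.of_equiv (Wsub_pgroup q NG hNGnil) (Subgroup.subgroupOfEquivOfLe hWqK).symm
    obtain ⟨R, hR⟩ := hW'p.exists_le_sylow
    obtain ⟨g, hg⟩ := MulAction.exists_smul_eq ↥(commutator G) R Q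
    intro w hw
    have hwK : w ∈ commutator G := hWqK hw
    have hw' : (⟨w, hwK⟩ : ↥(commutator G)) ∈ W' := by
      rw [hW'def, Subgroup.mem_subgroupOf]
      exact hw
    -- conjugate into Q
    have hconj : (⟨w, hwK⟩ : ↥(commutator G)) ∈ (Q : Subgroup ↥(commutator G)) := by
      rw [← hg]
      show _ ∈ ((g • R : Sylow q ↥(commutator G)) : Subgroup ↥(commutator G))
      rw [Sylow.coe_subgroup_smul, Subgroup.mem_pointwise_smul_iff_inv_smul_mem]
      refine hR ?_
      have heq : (MulAut.conj g)⁻¹ • (⟨w, hwK⟩ : ↥(commutator G)) = g⁻¹ * ⟨w, hwK⟩ * g := by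
        rw [← map_inv (MulAut.conj (G := ↥(commutator G)))]
        show MulAut.conj g⁻¹ _ = _
        rw [MulAut.conj_apply]
        group
      rw [heq]
      simpa using hW'norm.conj_mem _ hw' g⁻¹
    exact ⟨⟨w, hwK⟩, hconj, rfl⟩

  -- every element of NG normalizes Qimg
  have hnorm : ∀ (m : ℕ) (n : G), orderOf n = m → n ∈ NG → n ∈ normalizer (Qimg : Set G) := by
    intro m
    induction m using Nat.strong_induction_on with
    | _ m ih =>
      intro n hord hnNG
      rcases eq_or_ne m 0 with rfl | hm0
      · exact absurd (hord ▸ (orderOf_pos n).ne') (by simp)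
      rcases eq_or_ne m 1 with rfl | hm1
      · rw [orderOf_eq_one_iff.mp hord]
        exact Subgroup.one_mem _
      by_cases hpp : IsPrimePow m
      · obtain ⟨p, k, hp, hk, hpk⟩ := hpp
        have hpN : p.Prime := hp.nat_prime
        haveI : Fact p.Prime := ⟨hpN⟩
        by_cases hpq : p = q
        · subst hpq
          exact Subgroup.le_normalizer (hWq (mem_Wsub p NG hnNG ⟨k, by rw [hord, ← hpk]⟩))
        · have hnW : n ∈ Wsub p NG := mem_Wsub p NG hnNG ⟨k, by rw [hord, ← hpk]⟩
          have hcent : ∀ x ∈ Qimg, n * x = x * n := by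
            intro x hx
            have hxc := commClosure_le_centralizer h hpq NG hNGnil (hxQ x hx)
            exact Subgroup.mem_centralizer_iff.mp hxc n hnW
          rw [Subgroup.mem_normalizer_iff]
          intro x
          constructor
          · intro hx
            have h1 : n * x * n⁻¹ = x := by rw [hcent x hx]; group
            rw [h1]; exact hx
          · intro hx
            have h1 := hcent _ hx
            have h2 : x = n⁻¹ * (n * x * n⁻¹) * n := by group
            have h3 : n⁻¹ * (n * x * n⁻¹) * n = n * x * n⁻¹ := by
              rw [mul_assoc n⁻¹, ← h1]
              group
            rw [h2, h3]; exact hx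
      · -- composite order: split into two smaller coprime parts
        set p := m.minFac with hpdef
        have hpN : p.Prime := Nat.minFac_prime hm1
        have hpdvd : p ∣ m := Nat.minFac_dvd m
        set e := m.factorization p with hedef
        set d1 := p ^ e with hd1def
        set d2 := m / d1 with hd2def
        have hd1dvd : d1 ∣ m := Nat.ordProj_dvd m p
        have he_pos : 0 < e := hpN.factorization_pos_of_dvd hm0 hpdvd
        have hd1_1 : 1 < d1 := by
          calc 1 < p := hpN.one_lt
            _ = p ^ 1 := (pow_one p).symm
            _ ≤ p ^ e := Nat.pow_le_pow_right hpN.pos he_pos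
        have hm_pos : 0 < m := Nat.pos_of_ne_zero hm0
        have hd2_lt : d2 < m := Nat.div_lt_self hm_pos hd1_1
        have hd2dvd : d2 ∣ m := Nat.div_dvd_of_dvd hd1dvd
        have hd2_1 : d2 ≠ 1 := by
          intro hd2e
          apply hpp
          have hmd1 : m = d1 := by
            have := Nat.eq_mul_of_div_eq_right hd1dvd hd2e
            simpa using this
          exact ⟨p, e, hpN.prime, he_pos, by rw [← hd1def, ← hmd1]⟩
        have hd1_lt : d1 < m := by
          rcases (Nat.le_of_dvd hm_pos hd1dvd).lt_or_eq with h' | h'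
          · exact h'
          · exfalso
            apply hd2_1
            rw [hd2def, h', Nat.div_self hm_pos]
        have hn1 : orderOf (n ^ d1) = d2 := by
          rw [orderOf_pow, hord, Nat.gcd_eq_right hd1dvd]
        have hn2 : orderOf (n ^ d2) = d1 := by
          rw [orderOf_pow, hord, Nat.gcd_eq_right hd2dvd, hd2def, Nat.div_div_self hd1dvd hm0]
        have h1mem := ih d2 hd2_lt (n ^ d1) hn1 (NG.pow_mem hnNG d1)
        have h2mem := ih d1 hd1_lt (n ^ d2) hn2 (NG.pow_mem hnNG d2)
        have hcop : Nat.Coprime d1 d2 := Nat.Coprime.pow_left e (Nat.coprime_ordCompl hpN hm0)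
        have hbez : ((d1 : ℤ)) * Nat.gcdA d1 d2 + (d2 : ℤ) * Nat.gcdB d1 d2 = 1 := by
          have hb := Nat.gcd_eq_gcd_ab d1 d2
          rw [hcop] at hb
          exact_mod_cast hb.symm
        have hn_eq : n = ((n ^ d1) ^ Nat.gcdA d1 d2) * ((n ^ d2) ^ Nat.gcdB d1 d2) := by
          rw [← zpow_natCast n d1, ← zpow_natCast n d2, ← zpow_mul, ← zpow_mul, ← zpow_add, hbez,
            zpow_one]
        rw [hn_eq]
        exact Subgroup.mul_mem _ (Subgroup.zpow_mem _ h1mem _) (Subgroup.zpow_mem _ h2mem _)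
  -- Frattini argument
  have hmapcomm : ∀ z : ↥(commutator G), z ∈ commutator ↥(commutator G) → (z : G) ∈ NG := by
    intro z hz
    have hmc : (commutator ↥(commutator G)).map (commutator G).subtype = NG := by
      have h1 : _root_.commutator ↥(commutator G) = ⁅(⊤ : Subgroup ↥(commutator G)), ⊤⁆ := rfl
      rw [h1, Subgroup.map_commutator, ← MonoidHom.range_eq_map, Subgroup.range_subtype]
    rw [← hmc]
    exact ⟨z, hz, rfl⟩
  set M : Subgroup ↥(commutator G) := (Q : Subgroup ↥(commutator G)) ⊔ NG.subgroupOf (commutator G)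
    with hMdef
  have hcommM : commutator ↥(commutator G) ≤ M := by
    refine le_trans ?_ le_sup_right
    intro z hz
    rw [Subgroup.mem_subgroupOf]
    exact hmapcomm z hz
  haveI hMnorm : M.Normal := by
    constructor
    intro x hx g
    have h1 : g * x * g⁻¹ = ⁅g, x⁆ * x := by rw [commutatorElement_def]; group
    rw [h1]
    exact M.mul_mem (hcommM (Subgroup.commutator_mem_commutator (Subgroup.mem_top g)
      (Subgroup.mem_top x))) hx
  have frat := Sylow.normalizer_sup_eq_top' (N := M) Q le_sup_left
  have hMle : M ≤ normalizer ((Q : Subgroup ↥(commutator G)) : Set ↥(commutator G)) := by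
    refine sup_le Subgroup.le_normalizer ?_
    intro y hy
    rw [Subgroup.mem_subgroupOf] at hy
    have hyn : (y : G) ∈ normalizer (Qimg : Set G) := hnorm _ _ rfl hy
    rw [Subgroup.mem_normalizer_iff] at hyn ⊢
    intro x
    constructor
    · intro hx
      have hx' : ((x : ↥(commutator G)) : G) ∈ Qimg := ⟨x, hx, rfl⟩
      obtain ⟨z, hz, hzeq⟩ := (hyn (x : G)).mp hx'
      rw [Subgroup.coe_subtype] at hzeq
      have hzy : z = y * x * y⁻¹ := by
        apply Subtype.ext
        push_cast
        exact hzeq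
      rwa [← hzy]
    · intro hx
      have hx' : (((y * x * y⁻¹ : ↥(commutator G))) : G) ∈ Qimg := ⟨_, hx, rfl⟩
      have hx'' : (y : G) * (x : G) * (y : G)⁻¹ ∈ Qimg := by push_cast at hx'; exact hx'
      obtain ⟨z, hz, hzeq⟩ := (hyn (x : G)).mpr hx''
      have hzx : z = x := Subtype.coe_injective hzeq
      rwa [← hzx]
  have hQtop : normalizer ((Q : Subgroup ↥(commutator G)) : Set ↥(commutator G)) = ⊤ := by
    rw [← sup_of_le_left hMle]
    exact frat
  exact Subgroup.normalizer_eq_top_iff.mp hQtop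


end Endgame

section Main
universe u

theorem main_aux (n : ℕ) : ∀ (G : Type u) [Group G] [Finite G],
    Nat.card G ≤ n →
    (∀ a b : G, (∃ x y : G, a = ⁅x, y⁆) → (∃ x y : G, b = ⁅x, y⁆) →
      Nat.Coprime (orderOf a) (orderOf b) →
      orderOf (a * b) = orderOf a * orderOf b) →
    IsSolvable G → Group.IsNilpotent ↥(commutator G) := by
  induction n with
  | zero =>
      intro G _ _ hcard _ _
      exact absurd hcard (by simpa using Nat.card_pos.ne')
  | succ n ih =>
      intro G _ _ hcard h hsol
      by_cases hKbot : commutator G = ⊥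
      · haveI : Subsingleton ↥(⊥ : Subgroup G) := by
          constructor
          rintro ⟨a, ha⟩ ⟨b, hb⟩
          simp only [Subgroup.mem_bot] at ha hb
          subst ha; subst hb; rfl
        rw [hKbot]
        exact Group.isNilpotent_of_subsingleton
      · have hKtop : commutator G ≠ ⊤ := by
          intro htop
          have hall : ∀ m, derivedSeries G m = ⊤ := by
            intro m
            induction m with
            | zero => rfl
            | succ m ihm =>
                rw [derivedSeries_succ, ihm]
                exact htop
          obtain ⟨m, hm⟩ := (isSolvable_def G).mp hsol
          rw [hall m] at hm
          refine hKbot ?_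
          rw [← le_bot_iff, ← hm]
          exact le_top
        have hidx0 : (commutator G).index ≠ 0 := Subgroup.FiniteIndex.index_ne_zero
        have hidx1 : (commutator G).index ≠ 1 := fun h1 => hKtop (Subgroup.index_eq_one.mp h1)
        have hmul : Nat.card ↥(commutator G) * (commutator G).index = Nat.card G :=
          Subgroup.card_mul_index _
        have hKpos : 0 < Nat.card ↥(commutator G) := Nat.card_pos
        have h2idx : 2 ≤ (commutator G).index := by omega
        have hmul2 : Nat.card ↥(commutator G) * 2 ≤ Nat.card ↥(commutator G) * (commutator G).index :=
          Nat.mul_le_mul_left _ h2idx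
        have hcardK : Nat.card ↥(commutator G) ≤ n := by omega
        -- inherited hypothesis on the commutator subgroup
        have hsub : ∀ a b : ↥(commutator G),
            (∃ x y : ↥(commutator G), a = ⁅x, y⁆) → (∃ x y : ↥(commutator G), b = ⁅x, y⁆) →
            Nat.Coprime (orderOf a) (orderOf b) →
            orderOf (a * b) = orderOf a * orderOf b := by
          rintro a b ⟨x, y, hab⟩ ⟨u, v, hbv⟩ hcop
          have h1 := h (a : G) (b : G)
            ⟨x, y, by rw [hab]; push_cast; rfl⟩
            ⟨u, v, by rw [hbv]; push_cast; rfl⟩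
            (by rwa [Subgroup.orderOf_coe, Subgroup.orderOf_coe])
          have hco : ((a * b : ↥(commutator G)) : G) = (a : G) * (b : G) := by push_cast; rfl
          rw [← Subgroup.orderOf_coe a, ← Subgroup.orderOf_coe b, ← Subgroup.orderOf_coe (a * b),
            hco]
          exact h1
        have hnil2 : Group.IsNilpotent ↥(commutator ↥(commutator G)) :=
          ih ↥(commutator G) hcardK hsub
            (haveI : Group.IsSolvable G := hsol; inferInstanceAs (Group.IsSolvable ↥(commutator G)))
        have hmapeq : (commutator ↥(commutator G)).map (commutator G).subtype
            = ⁅commutator G, commutator G⁆ := by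
          have h1 : _root_.commutator ↥(commutator G) = ⁅(⊤ : Subgroup ↥(commutator G)), ⊤⁆ := rfl
          rw [h1, Subgroup.map_commutator, ← MonoidHom.range_eq_map, Subgroup.range_subtype]
        haveI hnil2' : Group.IsNilpotent ↥(commutator ↥(commutator G)) := hnil2
        have hNGnil : Group.IsNilpotent ↥(⁅commutator G, commutator G⁆ : Subgroup G) := by
          have e := Subgroup.equivMapOfInjective (commutator ↥(commutator G))
            (commutator G).subtype (commutator G).subtype_injective
          have := nilpotent_of_mulEquiv e
          rwa [hmapeq] at this
        refine ((isNilpotent_of_finite_tfae (G := ↥(commutator G))).out 3 0).mp ?_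
        intro q hq Q
        haveI := hq
        exact sylow_normal_in_commutator h hNGnil q Q

end Main

theorem soluble_case (G : Type*) [Group G] [Finite G]
    (h : ∀ a b : G, (∃ x y : G, a = ⁅x, y⁆) → (∃ x y : G, b = ⁅x, y⁆) →
      Nat.Coprime (orderOf a) (orderOf b) →
      orderOf (a * b) = orderOf a * orderOf b)
    (hsol : IsSolvable G) :
    Group.IsNilpotent (commutator G) := by
  exact main_aux (Nat.card G) G le_rfl h hsol
end

section
/- Let G be a finite group, p a prime, and P a Sylow p-subgroup of the commutator subgroup G'. Then P is generated by the set of elements of P that are commutators in G. -/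
open scoped commutatorElement

open Subgroup MonoidHom MulAction Function

/-- Variant of `MonoidHom.transfer_eq_pow` where conjugates are only required to be
equal after applying `ϕ`. -/
theorem transfer_eq_pow_of_phi {G : Type*} [Group G] {H : Subgroup G} {A : Type*} [CommGroup A]
    (ϕ : H →* A) [H.FiniteIndex] {g : G} (hg : g ∈ H)
    (key : ∀ (k : ℕ) (g₀ : G) (hk : g₀⁻¹ * g ^ k * g₀ ∈ H),
      ϕ ⟨g₀⁻¹ * g ^ k * g₀, hk⟩ = ϕ ⟨g, hg⟩ ^ k) :
    transfer ϕ g = ϕ ⟨g, hg⟩ ^ H.index := by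
  classical
  letI := H.fintypeQuotientOfFiniteIndex
  rw [transfer_eq_prod_quotient_orbitRel_zpowers_quot]
  have h1 : ∀ q : Quotient (orbitRel (zpowers g) (G ⧸ H)),
      ϕ ⟨q.out.out⁻¹ * g ^ Function.minimalPeriod (g • ·) q.out * q.out.out,
        QuotientGroup.out_conj_pow_minimalPeriod_mem H g q.out⟩
        = ϕ ⟨g, hg⟩ ^ Function.minimalPeriod (g • ·) q.out := fun q => key _ _ _
  rw [Fintype.prod_congr _ _ h1, Finset.prod_pow_eq_pow_sum]
  congr 1
  rw [index_eq_card, Nat.card_eq_fintype_card,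
    Fintype.card_congr (selfEquivSigmaOrbits (zpowers g) (G ⧸ H)), Fintype.card_sigma]
  exact (Finset.sum_congr rfl fun q _ =>
    (minimalPeriod_eq_card (a := g) (b := q.out)).symm).symm

theorem sylow_of_derived_generated_by_commutators (G : Type*) [Group G] [Finite G]
    (p : ℕ) [Fact p.Prime] (P : Sylow p (commutator G)) :
    Subgroup.map (commutator G).subtype (P : Subgroup (commutator G)) =
      Subgroup.closure {g : G |
        g ∈ Subgroup.map (commutator G).subtype (P : Subgroup (commutator G)) ∧
        ∃ x y : G, g = ⁅x, y⁆} := by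
  classical
  set Pm : Subgroup G := Subgroup.map (commutator G).subtype (P : Subgroup (commutator G))
    with hPm_def
  have hPm_p : IsPGroup p Pm := P.2.map _
  obtain ⟨Q, hPQ⟩ := hPm_p.exists_le_sylow
  have hPmle : Pm ≤ commutator G := map_subtype_le _
  -- Q ⊓ commutator G = Pm
  have hQG' : (Q : Subgroup G) ⊓ commutator G = Pm := by
    have hsub : IsPGroup p ((Q : Subgroup G).subgroupOf (commutator G)) :=
      Q.2.comap_of_injective (commutator G).subtype Subtype.val_injective
    have hle : (P : Subgroup (commutator G)) ≤ (Q : Subgroup G).subgroupOf (commutator G) := by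
      intro x hx
      exact hPQ ⟨x, hx, rfl⟩
    have heq := P.3 hsub hle
    calc (Q : Subgroup G) ⊓ commutator G
        = ((Q : Subgroup G).subgroupOf (commutator G)).map (commutator G).subtype := by
          rw [subgroupOf_map_subtype]
      _ = Pm := by rw [heq]
  set S : Set G := {g : G | g ∈ Pm ∧ ∃ x y : G, g = ⁅x, y⁆} with hS_def
  set C : Subgroup G := Subgroup.closure S with hC_def
  -- commutators of elements of Q lie in S ⊆ C
  have hcommS : ∀ x y : G, x ∈ Q → y ∈ Q → ⁅x, y⁆ ∈ C := by
    intro x y hx hy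
    refine Subgroup.subset_closure ⟨?_, x, y, rfl⟩
    rw [← hQG', Subgroup.mem_inf]
    constructor
    · show x * y * x⁻¹ * y⁻¹ ∈ (Q : Subgroup G)
      exact mul_mem (mul_mem (mul_mem hx hy) (inv_mem hx)) (inv_mem hy)
    · exact commutator_mem_commutator (mem_top x) (mem_top y)
  -- conjugates of elements of Pm inside Q differ by an element of S
  have hconj : ∀ a : G, a ∈ Pm → ∀ c : G, c⁻¹ * a * c ∈ (Q : Subgroup G) →
      a⁻¹ * (c⁻¹ * a * c) ∈ C := by
    intro a ha c hc
    refine Subgroup.subset_closure ⟨?_, a⁻¹, c⁻¹, by group⟩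
    rw [← hQG', Subgroup.mem_inf]
    constructor
    · exact mul_mem (inv_mem (hPQ ha)) hc
    · have haG' : a ∈ commutator G := hPmle ha
      have hnorm : (commutator G).Normal := Subgroup.commutator_normal ⊤ ⊤
      have hcG' : c⁻¹ * a * c ∈ commutator G := by
        simpa [mul_assoc] using hnorm.conj_mem a haG' c⁻¹
      exact mul_mem (inv_mem haG') hcG'
  -- normality of C inside Q
  haveI nC : (C.subgroupOf (Q : Subgroup G)).Normal := by
    constructor
    intro n hn q
    rw [mem_subgroupOf] at hn ⊢
    have h1 : ((q * n * q⁻¹ : (Q : Subgroup G)) : G) = (n : G) * ⁅(n : G)⁻¹, (q : G)⁆ := by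
      push_cast; group
    rw [h1]
    exact mul_mem hn (hcommS _ _ (inv_mem n.2) q.2)
  -- the quotient is commutative
  letI : CommGroup ((Q : Subgroup G) ⧸ C.subgroupOf (Q : Subgroup G)) :=
    { mul_comm := by
        intro a b
        induction a using QuotientGroup.induction_on with | _ x =>
        induction b using QuotientGroup.induction_on with | _ y =>
        rw [← QuotientGroup.mk_mul, ← QuotientGroup.mk_mul, QuotientGroup.eq, mem_subgroupOf]
        have h2 : (((x * y)⁻¹ * (y * x) : (Q : Subgroup G)) : G)
            = ⁅(y : G)⁻¹, (x : G)⁻¹⁆ := by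
          push_cast; group
        rw [h2]
        exact hcommS _ _ (inv_mem y.2) (inv_mem x.2) }
  set ϕ : (Q : Subgroup G) →* (Q : Subgroup G) ⧸ C.subgroupOf (Q : Subgroup G) :=
    QuotientGroup.mk' (C.subgroupOf (Q : Subgroup G)) with hϕ
  -- every element of Pm lies in C
  have hPmC : Pm ≤ C := by
    intro g hg
    have hgQ : g ∈ (Q : Subgroup G) := hPQ hg
    have key : ∀ (k : ℕ) (g₀ : G) (hk : g₀⁻¹ * g ^ k * g₀ ∈ (Q : Subgroup G)),
        ϕ ⟨g₀⁻¹ * g ^ k * g₀, hk⟩ = ϕ ⟨g, hgQ⟩ ^ k := by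
      intro k g₀ hk
      have hk' : g ^ k ∈ (Q : Subgroup G) := pow_mem hgQ k
      have hcoe : (⟨g, hgQ⟩ : (Q : Subgroup G)) ^ k = ⟨g ^ k, hk'⟩ := by
        ext; push_cast; rfl
      rw [← map_pow, hcoe, hϕ]
      symm
      rw [QuotientGroup.mk'_apply, QuotientGroup.mk'_apply, QuotientGroup.eq, mem_subgroupOf]
      exact hconj (g ^ k) (pow_mem hg k) g₀ hk
    have htrans := transfer_eq_pow_of_phi ϕ hgQ key
    have hker : transfer ϕ g = 1 :=
      Abelianization.commutator_subset_ker (transfer ϕ) (hPmle hg)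
    rw [hker] at htrans
    have hpq : IsPGroup p ((Q : Subgroup G) ⧸ C.subgroupOf (Q : Subgroup G)) :=
      Q.2.to_quotient _
    obtain ⟨k, hk⟩ := hpq (ϕ ⟨g, hgQ⟩)
    have hdvd1 : orderOf (ϕ ⟨g, hgQ⟩) ∣ p ^ k := orderOf_dvd_of_pow_eq_one hk
    have hdvd2 : orderOf (ϕ ⟨g, hgQ⟩) ∣ (Q : Subgroup G).index :=
      orderOf_dvd_of_pow_eq_one htrans.symm
    have hnd : ¬ p ∣ (Q : Subgroup G).index :=
      Q.not_dvd_index' Subgroup.FiniteIndex.index_ne_zero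
    have hcop : Nat.Coprime (p ^ k) (Q : Subgroup G).index :=
      Nat.Coprime.pow_left k
        ((Nat.Prime.coprime_iff_not_dvd (Fact.out : p.Prime)).mpr hnd)
    have hone : orderOf (ϕ ⟨g, hgQ⟩) = 1 :=
      Nat.dvd_one.mp (hcop ▸ Nat.dvd_gcd hdvd1 hdvd2)
    have h1 : ϕ ⟨g, hgQ⟩ = 1 := orderOf_eq_one_iff.mp hone
    have hmem : (⟨g, hgQ⟩ : (Q : Subgroup G)) ∈ C.subgroupOf (Q : Subgroup G) := by
      rwa [← QuotientGroup.ker_mk' (C.subgroupOf (Q : Subgroup G)), mem_ker]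
    rwa [mem_subgroupOf] at hmem
  refine le_antisymm hPmC ?_
  rw [hC_def, Subgroup.closure_le]
  exact fun g hg => hg.1
end

section
/- Let H be a finite 2-group of nilpotency class at most 2 with H' ≤ Z, where Z is a central subgroup of an ambient group G containing H, and let b ∈ N_G(H) be of odd order with [H, b] ⊄ Z. Then there exists d ∈ [H, b] with d ∉ Z and d² ∈ Z, and the commutator [d, b] is a 2-element which is a commutator of order 2 modulo Z. -/
open scoped commutatorElement
open scoped IsMulCommutative

theorem exists_square_central_commutator (G : Type*) [Group G] [Finite G]
    (Z : Subgroup G) (hZ : Z ≤ Subgroup.center G)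
    (H : Subgroup G) (hH2 : IsPGroup 2 H)
    (hclass : upperCentralSeries (↥H) 2 = ⊤)
    (hH' : ∀ h₁ ∈ H, ∀ h₂ ∈ H, ⁅h₁, h₂⁆ ∈ Z)
    (b : G) (hb : b ∈ Subgroup.normalizer (H : Set G)) (hodd : Odd (orderOf b))
    (hnc : ∃ h ∈ H, ⁅h, b⁆ ∉ Z) :
    ∃ d ∈ Subgroup.closure {c : G | ∃ h ∈ H, c = ⁅h, b⁆},
      d ∉ Z ∧ d ^ 2 ∈ Z ∧
      (∃ x y : G, ⁅d, b⁆ = ⁅x, y⁆) ∧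
      (∃ n : ℕ, orderOf ⁅d, b⁆ = 2 ^ n) ∧
      ⁅d, b⁆ ∉ Z ∧ ⁅d, b⁆ ^ 2 ∈ Z := by
  haveI hZn : Z.Normal := ⟨fun z hz g => by
    have := (Subgroup.mem_center_iff.mp (hZ hz)) g
    have : g * z * g⁻¹ = z := by rw [this]; group
    rw [this]; exact hz⟩
  set π : G →* G ⧸ Z := QuotientGroup.mk' Z with hπ
  have hker : ∀ x : G, π x = 1 ↔ x ∈ Z := fun x => QuotientGroup.eq_one_iff x
  set m := orderOf b with hm
  have hm0 : m ≠ 0 := hodd.pos.ne'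
  -- conjugation keeps H
  have hconj : ∀ g ∈ H, b * g * b⁻¹ ∈ H := fun g hg =>
    (Subgroup.mem_normalizer_iff.mp hb g).mp hg
  have hcommH : ∀ g ∈ H, ⁅g, b⁆ ∈ H := by
    intro g hg
    have : ⁅g, b⁆ = g * (b * g⁻¹ * b⁻¹) := by group
    rw [this]; exact mul_mem hg (hconj g⁻¹ (inv_mem hg))
  set B : G ⧸ Z := π b with hB
  set A : Subgroup (G ⧸ Z) := Subgroup.map π H with hA
  have hA2 : IsPGroup 2 A := hH2.map π
  -- commutativity of A
  have hQcomm : ∀ x ∈ A, ∀ y ∈ A, x * y = y * x := by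
    rintro x ⟨h₁, hh₁, rfl⟩ y ⟨h₂, hh₂, rfl⟩
    have h1 : π ⁅h₁, h₂⁆ = 1 := (hker _).mpr (hH' h₁ hh₁ h₂ hh₂)
    rw [map_commutatorElement] at h1
    exact (commutatorElement_eq_one_iff_mul_comm.mp h1)
  haveI hAc : IsMulCommutative A := ⟨⟨fun x y => Subtype.ext (hQcomm x x.2 y y.2)⟩⟩
  -- conjugation by B preserves A
  have hconjA : ∀ q ∈ A, B * q * B⁻¹ ∈ A := by
    rintro q ⟨h, hh, rfl⟩
    exact ⟨b * h * b⁻¹, hconj h hh, by simp [map_mul, hB]⟩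
  -- the endomorphism φ of A
  set φ : Monoid.End ↥A :=
    { toFun := fun a => ⟨B * ↑a * B⁻¹, hconjA ↑a a.2⟩
      map_one' := by ext; simp
      map_mul' := fun x y => by ext; push_cast; group } with hφ
  have hφcoe : ∀ a : ↥A, ((φ a : ↥A) : G ⧸ Z) = B * ↑a * B⁻¹ := fun a => rfl
  have hφpow : ∀ (i : ℕ) (a : ↥A), (((φ ^ i) a : ↥A) : G ⧸ Z) = B ^ i * ↑a * (B ^ i)⁻¹ := by
    intro i a
    induction i with
    | zero => simp
    | succ n ih =>
      have h1 : (φ ^ (n + 1)) a = φ ((φ ^ n) a) := by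
        rw [pow_succ']; rfl
      rw [h1, hφcoe, ih, pow_succ]
      group
  have hφm : ∀ a : ↥A, (φ ^ m) a = a := by
    intro a
    have hBm : B ^ m = 1 := by
      rw [hB, ← map_pow, hm, pow_orderOf_eq_one]; simp [hπ]
    exact Subtype.ext (by rw [hφpow, hBm]; group)
  -- trace map
  set T : ↥A → ↥A := fun a => ∏ i ∈ Finset.range m, (φ ^ i) a with hT
  have hTmul : ∀ a c : ↥A, T (a * c) = T a * T c := by
    intro a c
    simp only [hT, map_mul]
    exact Finset.prod_mul_distrib
  have hTone : T 1 = 1 := by simp [hT]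
  have hTinv : ∀ a : ↥A, T a⁻¹ = (T a)⁻¹ := by
    intro a; simp [hT, Finset.prod_inv_distrib]
  have hTshift : ∀ a : ↥A, T (φ a) = T a := by
    intro a
    obtain ⟨k, hk⟩ : ∃ k, m = k + 1 := ⟨m - 1, (Nat.succ_pred_eq_of_ne_zero hm0).symm⟩
    have h1 : T (φ a) = ∏ i ∈ Finset.range m, (φ ^ (i + 1)) a := by
      apply Finset.prod_congr rfl
      intro i _
      rw [pow_succ]; rfl
    have h3 : T a = (∏ x ∈ Finset.range k, (φ ^ (x + 1)) a) * (φ ^ 0) a := by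
      have : T a = ∏ i ∈ Finset.range (k + 1), (φ ^ i) a := by rw [hT, hk]
      rw [this, Finset.prod_range_succ']
    have h2 : (φ ^ (k + 1)) a = (φ ^ 0) a := by rw [← hk, hφm]; simp
    rw [h1, hk, Finset.prod_range_succ, h2, h3]
  have hTgen : ∀ a : ↥A, T (a * (φ a)⁻¹) = 1 := by
    intro a
    rw [hTmul, hTinv, hTshift, mul_inv_cancel]
  have hTfix : ∀ a : ↥A, φ a = a → T a = a ^ m := by
    intro a ha
    have : ∀ i : ℕ, (φ ^ i) a = a := by
      intro i
      induction i with
      | zero => rfl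
      | succ n ih =>
        have e : (φ ^ (n + 1)) a = φ ((φ ^ n) a) := by rw [pow_succ']; rfl
        rw [e, ih, ha]
    have h4 : T a = ∏ _i ∈ Finset.range m, a := Finset.prod_congr rfl (fun i _ => this i)
    rw [h4, Finset.prod_const, Finset.card_range]
  set S : Set G := {c : G | ∃ h ∈ H, c = ⁅h, b⁆} with hS
  set D : Subgroup G := Subgroup.closure S with hD
  have hSH : S ⊆ (H : Set G) := by rintro c ⟨h, hh, rfl⟩; exact hcommH h hh
  have hDH : D ≤ H := (Subgroup.closure_le H).mpr hSH
  -- every element of D has trace 1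
  have hP : ∀ g ∈ D, ∃ a : ↥A, (↑a : G ⧸ Z) = π g ∧ T a = 1 := by
    intro g hg
    refine Subgroup.closure_induction ?_ ?_ ?_ ?_ hg
    · rintro c ⟨h, hh, rfl⟩
      set a : ↥A := ⟨π h, ⟨h, hh, rfl⟩⟩ with ha
      refine ⟨a * (φ a)⁻¹, ?_, hTgen a⟩
      have hc : ((a * (φ a)⁻¹ : ↥A) : G ⧸ Z) = π h * (B * π h * B⁻¹)⁻¹ := rfl
      rw [hc, map_commutatorElement, hB]
      group
    · exact ⟨1, by simp, hTone⟩
    · rintro x y - - ⟨ax, hax, hTx⟩ ⟨ay, hay, hTy⟩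
      refine ⟨ax * ay, ?_, by rw [hTmul, hTx, hTy, one_mul]⟩
      rw [map_mul]; push_cast [hax, hay]; rfl
    · rintro x - ⟨ax, hax, hTx⟩
      refine ⟨ax⁻¹, ?_, by rw [hTinv, hTx, inv_one]⟩
      rw [map_inv]; push_cast [hax]; rfl
  -- key: elements of D with commutator in Z are in Z
  have star : ∀ d ∈ D, ⁅d, b⁆ ∈ Z → d ∈ Z := by
    intro d hd hdb
    obtain ⟨a, ha, hTa⟩ := hP d hd
    have hfix : φ a = a := by
      apply Subtype.ext
      rw [hφcoe, ha]
      have h1 : π ⁅d, b⁆ = 1 := (hker _).mpr hdb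
      rw [map_commutatorElement] at h1
      have h2 := commutatorElement_eq_one_iff_mul_comm.mp h1
      rw [hB, ← h2]; group
    have hm1 : a ^ m = 1 := by rw [← hTfix a hfix, hTa]
    obtain ⟨n, hn⟩ := hA2 a
    have hdv : orderOf a ∣ Nat.gcd (2 ^ n) m :=
      Nat.dvd_gcd (orderOf_dvd_of_pow_eq_one hn) (orderOf_dvd_of_pow_eq_one hm1)
    have hcop : Nat.Coprime (2 ^ n) m := Nat.Coprime.pow_left _ (Nat.coprime_two_left.mpr hodd)
    rw [hcop] at hdv
    have ha1 : a = 1 := orderOf_eq_one_iff.mp (Nat.dvd_one.mp hdv)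
    apply (hker d).mp
    rw [← ha, ha1]; rfl
  -- pick the witness
  obtain ⟨h₀, hh₀, hg₀⟩ := hnc
  set g : G := ⁅h₀, b⁆ with hg
  have hgD : g ∈ D := Subgroup.subset_closure ⟨h₀, hh₀, rfl⟩
  have hgH : g ∈ H := hcommH h₀ hh₀
  set a₀ : ↥A := (⟨π g, ⟨g, hgH, rfl⟩⟩ : ↥A) with ha₀
  have ha₀ne : a₀ ≠ 1 := by
    intro h
    exact hg₀ ((hker g).mp (congrArg Subtype.val h))
  obtain ⟨n, hn⟩ := hA2 a₀
  obtain ⟨k, -, hk⟩ := (Nat.dvd_prime_pow Nat.prime_two).mp (orderOf_dvd_of_pow_eq_one hn)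
  have hk0 : k ≠ 0 := by
    intro h; rw [h, pow_zero] at hk
    exact ha₀ne (orderOf_eq_one_iff.mp hk)
  obtain ⟨j, hj⟩ : ∃ j, k = j + 1 := ⟨k - 1, (Nat.succ_pred_eq_of_ne_zero hk0).symm⟩
  set d : G := g ^ 2 ^ j with hdd
  have hdD : d ∈ D := pow_mem hgD _
  have hdH : d ∈ H := hDH hdD
  have hπd : π d = ((a₀ ^ 2 ^ j : ↥A) : G ⧸ Z) := by
    rw [hdd, map_pow]; push_cast [ha₀]; rfl
  have hdnZ : d ∉ Z := by
    intro hmem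
    have h1 : ((a₀ ^ 2 ^ j : ↥A) : G ⧸ Z) = 1 := by rw [← hπd]; exact (hker d).mpr hmem
    have h2 : a₀ ^ 2 ^ j = 1 := by exact_mod_cast h1
    have h3 := orderOf_dvd_of_pow_eq_one h2
    rw [hk, hj] at h3
    exact absurd (Nat.le_of_dvd (by positivity) h3)
      (not_le.mpr (Nat.pow_lt_pow_right one_lt_two (lt_add_one j)))
  have hd2Z : d ^ 2 ∈ Z := by
    apply (hker _).mp
    rw [map_pow, hπd, ← SubgroupClass.coe_pow, ← pow_mul, ← pow_succ, ← hj, ← hk,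
      pow_orderOf_eq_one]
    rfl
  have hdbnZ : ⁅d, b⁆ ∉ Z := fun hmem => hdnZ (star d hdD hmem)
  have hdbH : ⁅d, b⁆ ∈ H := hcommH d hdH
  refine ⟨d, hdD, hdnZ, hd2Z, ⟨d, b, rfl⟩, ?_, hdbnZ, ?_⟩
  · obtain ⟨n', hn'⟩ := hH2 ⟨⁅d, b⁆, hdbH⟩
    have h1 : ⁅d, b⁆ ^ 2 ^ n' = 1 := by
      have := congrArg Subtype.val hn'
      push_cast at this
      exact this
    obtain ⟨k', -, hk'⟩ := (Nat.dvd_prime_pow Nat.prime_two).mp (orderOf_dvd_of_pow_eq_one h1)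
    exact ⟨k', hk'⟩
  · apply (hker _).mp
    have hdA : π d ∈ A := ⟨d, hdH, rfl⟩
    have hcm : Commute (π d) (B * π d * B⁻¹) := hQcomm _ hdA _ (hconjA _ hdA)
    have hq2 : (π d) ^ 2 = 1 := by rw [← map_pow]; exact (hker _).mpr hd2Z
    have hq'2 : (B * π d * B⁻¹) ^ 2 = 1 := by
      have e : (B * π d * B⁻¹) ^ 2 = B * (π d) ^ 2 * B⁻¹ := by rw [sq, sq]; group
      rw [e, hq2]; group
    have h1 : π ⁅d, b⁆ = π d * (B * π d * B⁻¹)⁻¹ := by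
      rw [map_commutatorElement, hB]; group
    rw [map_pow, h1, (hcm.inv_right).mul_pow, hq2, inv_pow, hq'2]
    simp
end

section
/- Let G be a finite quasisimple group and a ∈ G a 2-element with a ∉ Z(G) and a² ∈ Z(G). Then there exists t ∈ G such that the commutator [a, t] has odd order different from 1. -/
open Subgroup
open scoped Pointwise
open scoped commutatorElement

universe u

/-- Key p-group lemma: in a finite p-group `W`, if `Y` is a conjugation-closed subset and
`D` a subgroup generated by `Y ∩ D`, with `Y ⊄ D`, then some element of `Y` outside `D`
normalizes `D`. -/
private lemma key_normalizer_lemma :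
    ∀ (n : ℕ) (W : Type u) (_ : Group W) (_ : Finite W), Nat.card W ≤ n →
    ∀ (p : ℕ), Fact p.Prime → IsPGroup p W →
    ∀ (Y : Set W), (∀ (w y : W), y ∈ Y → w * y * w⁻¹ ∈ Y) →
    ∀ (D : Subgroup W), Subgroup.closure (Y ∩ (D : Set W)) = D → ¬ Y ⊆ (D : Set W) →
    ∃ y, y ∈ Y ∧ y ∉ D ∧ ∀ d ∈ D, y * d * y⁻¹ ∈ D := by
  intro n
  induction n with
  | zero =>
    intro W _ _ hcard
    exact absurd hcard (by have := Nat.card_pos (α := W); omega)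
  | succ n IH =>
    intro W _ _ hcard p hp hpW Y hYconj D hD hYD
    classical
    obtain ⟨y₀, hy₀Y, hy₀D⟩ : ∃ y, y ∈ Y ∧ y ∉ D := by
      rcases Set.not_subset.mp hYD with ⟨y, hy, hyD⟩; exact ⟨y, hy, hyD⟩
    by_cases hDnorm : D.Normal
    · exact ⟨y₀, hy₀Y, hy₀D, fun d hd => hDnorm.conj_mem d hd y₀⟩
    -- helper: recursion into a proper subgroup V containing D with a Y-element outside D
    have IHsub : ∀ V : Subgroup W, V ≠ ⊤ → D ≤ V → (∃ y, y ∈ Y ∧ y ∈ V ∧ y ∉ D) →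
        ∃ y, y ∈ Y ∧ y ∉ D ∧ ∀ d ∈ D, y * d * y⁻¹ ∈ D := by
      rintro V hVtop hDV ⟨yv, hyvY, hyvV, hyvD⟩
      have hlt : Nat.card ↥V < Nat.card W := by
        have hle : Nat.card ↥V ≤ Nat.card W :=
          Nat.card_le_card_of_injective _ V.subtype_injective
        rcases hle.lt_or_eq with h | h
        · exact h
        · exact absurd (Subgroup.eq_top_of_card_eq V h) hVtop
      set YV : Set ↥V := {y : ↥V | (y : W) ∈ Y} with hYVdef
      set DV : Subgroup ↥V := D.subgroupOf V with hDVdef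
      have hclos : Subgroup.closure (YV ∩ (DV : Set ↥V)) = DV := by
        apply Subgroup.map_injective V.subtype_injective
        rw [MonoidHom.map_closure]
        have himg : (V.subtype '' (YV ∩ (DV : Set ↥V))) = Y ∩ (D : Set W) := by
          ext x; constructor
          · rintro ⟨⟨x, hxV⟩, ⟨hxY, hxD⟩, rfl⟩
            exact ⟨hxY, hxD⟩
          · rintro ⟨hxY, hxD⟩
            exact ⟨⟨x, hDV hxD⟩, ⟨hxY, Subgroup.mem_subgroupOf.mpr hxD⟩, rfl⟩
        rw [himg, hD, Subgroup.subgroupOf_map_subtype, inf_eq_left.mpr hDV]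
      obtain ⟨y, hyY, hyD, hynorm⟩ :=
        IH ↥V inferInstance inferInstance (by omega) p hp (hpW.to_subgroup V)
          YV (fun w y hy => hYconj w y hy)
          DV hclos
          (by
            intro hsub
            exact hyvD (Subgroup.mem_subgroupOf.mp (hsub (show (⟨yv, hyvV⟩ : ↥V) ∈ YV from hyvY))))
      refine ⟨(y : W), hyY, fun h => hyD (Subgroup.mem_subgroupOf.mpr h), ?_⟩
      intro d hd
      have := hynorm ⟨d, hDV hd⟩ (Subgroup.mem_subgroupOf.mpr hd)
      exact Subgroup.mem_subgroupOf.mp this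
    -- the normal closure F of Y ∩ D
    set E : Set W := Y ∩ (D : Set W) with hEdef
    set F : Subgroup W := Subgroup.normalClosure E with hFdef
    have hEY : E ⊆ Y := Set.inter_subset_left
    have hDF : D ≤ F := by
      rw [← hD]; exact Subgroup.closure_le _ |>.mpr Subgroup.subset_normalClosure
    have hFnormal : F.Normal := Subgroup.normalClosure_normal
    by_cases hFtop : F = ⊤
    · -- main case
      -- W is nontrivial
      have hWnt : Nontrivial W := ⟨y₀, 1, fun h => hy₀D (h ▸ D.one_mem)⟩
      haveI := hpW.center_nontrivial
      obtain ⟨z, hzne⟩ := exists_ne (1 : ↥(Subgroup.center W))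
      set Z : Subgroup W := Subgroup.zpowers (z : W) with hZdef
      have hZle : Z ≤ Subgroup.center W := by
        rw [hZdef]; exact Subgroup.zpowers_le.mpr z.2
      have hcen : ∀ x ∈ Z, ∀ t : W, x * t = t * x :=
        fun x hx t => (Subgroup.mem_center_iff.mp (hZle hx) t).symm
      have hZcentral : ∀ u : W, ∀ x ∈ Z, u * x * u⁻¹ = x := by
        intro u x hx
        rw [← hcen x hx u]; group
      have hZnormal : Z.Normal := ⟨fun x hx g => by rw [hZcentral g x hx]; exact hx⟩
      haveI := hZnormal
      have hZnontriv : (z : W) ≠ 1 := by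
        intro h; apply hzne; ext; exact h
      -- quotient recursion helper
      have IHquot : (∀ y ∈ Y, y ∈ D ⊔ Z → y ∈ D) →
          ∃ y₁, y₁ ∈ Y ∧ y₁ ∉ D ⊔ Z ∧ ∀ t ∈ D ⊔ Z, y₁ * t * y₁⁻¹ ∈ D ⊔ Z := by
        intro hkey
        set π := QuotientGroup.mk' Z with hπdef
        have hπsurj : Function.Surjective π := QuotientGroup.mk'_surjective Z
        have hπker : π.ker = Z := QuotientGroup.ker_mk' Z
        have hcardq : Nat.card (W ⧸ Z) ≤ n := by
          have h1 : Nat.card W = Nat.card (W ⧸ Z) * Nat.card ↥Z :=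
            Subgroup.card_eq_card_quotient_mul_card_subgroup Z
          have h2 : 1 < Nat.card ↥Z := by
            haveI : Nontrivial ↥Z := ⟨⟨⟨(z : W), Subgroup.mem_zpowers _⟩, 1, fun h => hZnontriv (by
              have := congrArg (Subtype.val) h; exact this)⟩⟩
            exact Finite.one_lt_card
          have h3 : 0 < Nat.card (W ⧸ Z) := Nat.card_pos
          nlinarith [h1, h2, h3]
        set Yq : Set (W ⧸ Z) := π '' Y with hYqdef
        set Dq : Subgroup (W ⧸ Z) := D.map π with hDqdef
        have hcomap : Subgroup.comap π Dq = D ⊔ Z := by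
          rw [hDqdef, Subgroup.comap_map_eq, hπker]
        have hmemDq : ∀ x : W, π x ∈ Dq ↔ x ∈ D ⊔ Z := by
          intro x
          constructor
          · intro h; rw [← hcomap]; exact h
          · intro h; have : x ∈ Subgroup.comap π Dq := by rw [hcomap]; exact h
            exact this
        have hYqclos : Subgroup.closure (Yq ∩ (Dq : Set (W ⧸ Z))) = Dq := by
          have himg : Yq ∩ (Dq : Set (W ⧸ Z)) = π '' E := by
            ext xq; constructor
            · rintro ⟨⟨y, hyY, rfl⟩, hyDq⟩
              exact ⟨y, ⟨hyY, hkey y hyY ((hmemDq y).mp hyDq)⟩, rfl⟩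
            · rintro ⟨e, ⟨heY, heD⟩, rfl⟩
              exact ⟨⟨e, heY, rfl⟩, (hmemDq e).mpr (Subgroup.mem_sup_left heD)⟩
          rw [himg, ← MonoidHom.map_closure, hD]
        have hYqnsub : ¬ Yq ⊆ (Dq : Set (W ⧸ Z)) := by
          intro hsub
          have := hsub ⟨y₀, hy₀Y, rfl⟩
          exact hy₀D (hkey y₀ hy₀Y ((hmemDq y₀).mp this))
        obtain ⟨yq, hyqY, hyqD, hyqnorm⟩ :=
          IH (W ⧸ Z) inferInstance inferInstance hcardq p hp (hpW.to_quotient Z)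
            Yq (by
              rintro w y ⟨y', hy', rfl⟩
              obtain ⟨w', rfl⟩ := hπsurj w
              exact ⟨w' * y' * w'⁻¹, hYconj w' y' hy', by simp [map_mul, map_inv]⟩)
            Dq hYqclos hYqnsub
        obtain ⟨y₁, hy₁Y, rfl⟩ := hyqY
        refine ⟨y₁, hy₁Y, fun h => hyqD ((hmemDq y₁).mpr h), ?_⟩
        intro t ht
        have h1 : π t ∈ Dq := (hmemDq t).mpr ht
        have h2 := hyqnorm (π t) h1
        have : π (y₁ * t * y₁⁻¹) ∈ Dq := by
          rw [map_mul, map_mul, map_inv]; exact h2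
        exact (hmemDq _).mp this
      by_cases hZD : Z ≤ D
      · have hsup : D ⊔ Z = D := sup_eq_left.mpr hZD
        obtain ⟨y₁, hy₁Y, hy₁D, hy₁norm⟩ := IHquot (by rw [hsup]; exact fun y _ h => h)
        rw [hsup] at hy₁D hy₁norm
        exact ⟨y₁, hy₁Y, hy₁D, hy₁norm⟩
      · by_cases hYDZ : ∃ y, y ∈ Y ∧ y ∈ D ⊔ Z ∧ y ∉ D
        · obtain ⟨y, hyY, hyDZ, hyD⟩ := hYDZ
          -- y = d * ζ with ζ central
          have : y ∈ (D : Set W) * (Z : Set W) := by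
            rw [← Subgroup.mul_normal]; exact hyDZ
          obtain ⟨d, hd, ζ, hζ, rfl⟩ := this
          refine ⟨d * ζ, hyY, hyD, ?_⟩
          intro t ht
          have hcomm : ζ * t * ζ⁻¹ = t := by
            rw [hcen ζ hζ t]; group
          have h1 : (d * ζ) * t * (d * ζ)⁻¹ = d * (ζ * t * ζ⁻¹) * d⁻¹ := by group
          rw [h1, hcomm]
          exact D.mul_mem (D.mul_mem hd ht) (D.inv_mem hd)
        · push_neg at hYDZ
          have hkey : ∀ y ∈ Y, y ∈ D ⊔ Z → y ∈ D := fun y hy hDZ => hYDZ y hy hDZ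
          obtain ⟨y₁, hy₁Y, hy₁DZ, hy₁norm⟩ := IHquot hkey
          -- V := normalizer of D ⊔ Z
          set V : Subgroup W := Subgroup.normalizer ((D ⊔ Z : Subgroup W) : Set W) with hVdef
          have hDZnotnorm : ¬ (D ⊔ Z).Normal := by
            intro hnorm
            -- F = ⊤ ≤ D ⊔ Z, so D ⊔ Z = ⊤, then D is normal: contradiction
            have htop : D ⊔ Z = ⊤ := by
              have : F ≤ D ⊔ Z := by
                rw [hFdef]
                exact Subgroup.normalClosure_le_normal
                  (Set.inter_subset_right.trans (SetLike.coe_subset_coe.mpr le_sup_left))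
              rw [hFtop] at this; exact top_le_iff.mp this
            apply hDnorm
            constructor
            intro x hx g
            have hg : g ∈ D ⊔ Z := htop ▸ Subgroup.mem_top g
            have : g ∈ (D : Set W) * (Z : Set W) := by rw [← Subgroup.mul_normal]; exact hg
            obtain ⟨d, hd, ζ, hζ, rfl⟩ := this
            have h1 : (d * ζ) * x * (d * ζ)⁻¹ = d * (ζ * x * ζ⁻¹) * d⁻¹ := by group
            have h2 : ζ * x * ζ⁻¹ = x := by rw [hcen ζ hζ x]; group
            rw [h1, h2]
            exact D.mul_mem (D.mul_mem hd hx) (D.inv_mem hd)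
          have hVne : V ≠ ⊤ := by
            intro h
            exact hDZnotnorm (Subgroup.normalizer_eq_top_iff.mp h)
          apply IHsub V hVne
          · -- D ≤ V
            intro d hd
            apply Subgroup.mem_normalizer_fintype
            intro t ht
            have ht' : t ∈ (D : Set W) * (Z : Set W) := by
              rw [← Subgroup.mul_normal]; exact ht
            obtain ⟨d₁, hd₁, ζ, hζ, rfl⟩ := ht'
            have hc := hcen ζ hζ d⁻¹
            have heq : d * (d₁ * ζ) * d⁻¹ = (d * d₁ * d⁻¹) * ζ := by
              calc d * (d₁ * ζ) * d⁻¹ = d * d₁ * (ζ * d⁻¹) := by group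
                _ = d * d₁ * (d⁻¹ * ζ) := by rw [hc]
                _ = (d * d₁ * d⁻¹) * ζ := by group
            have : d * (d₁ * ζ) * d⁻¹ ∈ (D : Set W) * (Z : Set W) := by
              rw [heq]
              exact ⟨d * d₁ * d⁻¹, D.mul_mem (D.mul_mem hd hd₁) (D.inv_mem hd), ζ, hζ, rfl⟩
            rw [← Subgroup.mul_normal] at this
            exact this
          · refine ⟨y₁, hy₁Y, ?_, fun h => hy₁DZ (Subgroup.mem_sup_left h)⟩
            apply Subgroup.mem_normalizer_fintype
            intro t ht
            exact hy₁norm t ht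
    · -- recursion into F
      apply IHsub F hFtop hDF
      by_contra hcon
      push_neg at hcon
      -- Y ∩ F ⊆ D, hence F ≤ D, hence D normal: contradiction
      apply hDnorm
      have hFD : F ≤ D := by
        rw [hFdef, Subgroup.normalClosure]
        apply (Subgroup.closure_le _).mpr
        intro x hx
        obtain ⟨e, heE, hconj⟩ := Group.mem_conjugatesOfSet_iff.mp hx
        obtain ⟨c, hc⟩ := isConj_iff.mp hconj
        have hxY : x ∈ Y := by
          rw [← hc]; exact hYconj c e (hEY heE)
        have hxF : x ∈ F := by
          rw [hFdef]
          exact Subgroup.subset_closure hx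
        exact hcon x hxY hxF
      have : D = F := le_antisymm hDF hFD
      rw [this]; exact hFnormal

private lemma subgroup_eq_of_le_of_card_le {X : Type u} [Group X] [Finite X]
    {W R : Subgroup X} (h : W ≤ R) (hc : Nat.card ↥R ≤ Nat.card ↥W) : W = R := by
  have h1 : (W : Set X) ⊆ (R : Set X) := h
  have h2 : (R : Set X).ncard ≤ (W : Set X).ncard := by
    rwa [← Nat.card_coe_set_eq, ← Nat.card_coe_set_eq]
  exact SetLike.ext' (Set.eq_of_subset_of_ncard_le h1 h2 (Set.toFinite _))

/-- Baer–Suzuki: if `K` is a conjugation-closed subset of a finite group such that any two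
elements of `K` generate a `p`-subgroup, then `K` generates a `p`-subgroup. -/
private theorem baer_suzuki_aux :
    ∀ (n : ℕ) (X : Type u) (_ : Group X) (_ : Finite X), Nat.card X ≤ n →
    ∀ (p : ℕ), Fact p.Prime →
    ∀ (K : Set X), (∀ (g x : X), x ∈ K → g * x * g⁻¹ ∈ K) →
    (∀ x ∈ K, ∀ y ∈ K, IsPGroup p ↥(Subgroup.closure {x, y})) →
    IsPGroup p ↥(Subgroup.closure K) := by
  intro n
  induction n with
  | zero =>
    intro X _ _ hcard
    exact absurd hcard (by have := Nat.card_pos (α := X); omega)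
  | succ n IH =>
    intro X _ _ hcard p hp K hKconj hKpair
    classical
    by_cases hKtriv : ∀ x ∈ K, x = (1 : X)
    · have hle : Subgroup.closure K ≤ ⊥ := by
        apply (Subgroup.closure_le _).mpr
        intro x hx
        rw [hKtriv x hx]
        exact Subgroup.one_mem _
      exact IsPGroup.to_le (IsPGroup.of_card
        (show Nat.card ↥(⊥ : Subgroup X) = p ^ 0 by simp)) hle
    by_cases hOp : ∃ P : Subgroup X, P.Normal ∧ P ≠ ⊥ ∧ IsPGroup p ↥P
    · -- quotient by a nontrivial normal p-subgroup
      obtain ⟨P, hPnorm, hPbot, hPp⟩ := hOp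
      haveI := hPnorm
      set π := QuotientGroup.mk' P with hπdef
      have hπsurj : Function.Surjective π := QuotientGroup.mk'_surjective P
      have hcardq : Nat.card (X ⧸ P) ≤ n := by
        have h1 : Nat.card X = Nat.card (X ⧸ P) * Nat.card ↥P :=
          Subgroup.card_eq_card_quotient_mul_card_subgroup P
        have h2 : 1 < Nat.card ↥P := by
          haveI : Nontrivial ↥P := (Subgroup.nontrivial_iff_ne_bot _).mpr hPbot
          exact Finite.one_lt_card
        have h3 : 0 < Nat.card (X ⧸ P) := Nat.card_pos
        nlinarith [h1, h2, h3]
      have hq : IsPGroup p ↥(Subgroup.closure (π '' K)) := by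
        apply IH (X ⧸ P) inferInstance inferInstance hcardq p hp (π '' K)
        · rintro g x ⟨x', hx', rfl⟩
          obtain ⟨g', rfl⟩ := hπsurj g
          exact ⟨g' * x' * g'⁻¹, hKconj g' x' hx', by simp [map_mul, map_inv]⟩
        · rintro x ⟨x', hx', rfl⟩ y ⟨y', hy', rfl⟩
          have hmapeq : Subgroup.closure {π x', π y'} = (Subgroup.closure {x', y'}).map π := by
            rw [MonoidHom.map_closure, Set.image_pair]
          rw [hmapeq]
          exact (hKpair x' hx' y' hy').map π
      rintro ⟨g, hg⟩
      have hgq : π g ∈ Subgroup.closure (π '' K) := by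
        rw [← MonoidHom.map_closure]
        exact ⟨g, hg, rfl⟩
      obtain ⟨k, hk⟩ := hq ⟨π g, hgq⟩
      have hk' : π (g ^ p ^ k) = 1 := by
        have := congrArg Subtype.val hk
        simpa [map_pow] using this
      have hgP : g ^ p ^ k ∈ P := (QuotientGroup.eq_one_iff _).mp hk'
      obtain ⟨j, hj⟩ := hPp ⟨g ^ p ^ k, hgP⟩
      refine ⟨k + j, ?_⟩
      have hgpow : g ^ p ^ (k + j) = 1 := by
        have h2 : (g ^ p ^ k) ^ p ^ j = 1 := by
          simpa using congrArg Subtype.val hj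
        rw [pow_add, pow_mul]
        exact h2
      exact Subtype.ext (by simpa using hgpow)
    · -- no nontrivial normal p-subgroup
      push_neg at hOp
      have h_nonormal : ∀ P : Subgroup X, P.Normal → IsPGroup p ↥P → P = ⊥ := by
        intro P h1 h2
        by_contra h3
        exact (hOp P h1 h3) h2
      push_neg at hKtriv
      obtain ⟨x₀, hx₀K, hx₀ne⟩ := hKtriv
      set S : Set (Subgroup X) := {Q | IsPGroup p ↥Q ∧ Subgroup.closure (K ∩ (Q : Set X)) = Q}
        with hSdef
      have hQ₀S : Subgroup.closure {x₀} ∈ S := by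
        constructor
        · have := hKpair x₀ hx₀K x₀ hx₀K
          rwa [Set.pair_eq_singleton] at this
        · apply le_antisymm
          · exact (Subgroup.closure_le _).mpr Set.inter_subset_right
          · apply (Subgroup.closure_le _).mpr
            intro t ht
            rw [Set.mem_singleton_iff] at ht; subst ht
            exact Subgroup.subset_closure ⟨hx₀K, Subgroup.subset_closure rfl⟩
      have hmax_above : ∀ Q ∈ S, ∃ W, W ∈ S ∧ Q ≤ W ∧ ∀ R ∈ S, W ≤ R → W = R := by
        intro Q hQ
        obtain ⟨W, hWT, hWmax⟩ := Set.Finite.exists_maximalFor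
          (fun R : Subgroup X => Nat.card ↥R) {R ∈ S | Q ≤ R} (Set.toFinite _) ⟨Q, hQ, le_rfl⟩
        refine ⟨W, hWT.1, hWT.2, ?_⟩
        intro R hR hWR
        have hcardle : Nat.card ↥W ≤ Nat.card ↥R := Subgroup.card_le_of_le hWR
        have := hWmax (j := R) ⟨hR, hWT.2.trans hWR⟩ hcardle
        exact subgroup_eq_of_le_of_card_le hWR this
      obtain ⟨W₀, hW₀S, hW₀ge, hW₀max⟩ := hmax_above _ hQ₀S
      have hx₀W₀ : x₀ ∈ W₀ := hW₀ge (Subgroup.subset_closure rfl)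
      have hMnontriv : ∀ W, W ∈ S → (∀ R ∈ S, W ≤ R → W = R) →
          ∃ x, x ∈ K ∧ x ∈ W ∧ x ≠ 1 := by
        intro W hWS hWmax
        by_contra hcon
        push_neg at hcon
        have hWbot : W = ⊥ := by
          have h1 : Subgroup.closure (K ∩ (W : Set X)) ≤ ⊥ := by
            apply (Subgroup.closure_le _).mpr
            intro x hx
            have := hcon x hx.1 hx.2
            simp [this]
          rw [hWS.2] at h1
          exact le_bot_iff.mp h1
      -- ⊥ is not maximal
        have := hWmax W₀ hW₀S (hWbot ▸ bot_le)
        rw [← this, hWbot] at hx₀W₀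
        exact hx₀ne (Subgroup.mem_bot.mp hx₀W₀)
      -- conjugation stability of S
      have hconjS : ∀ (g : X) (Q : Subgroup X), Q ∈ S →
          Subgroup.map (MulAut.conj g).toMonoidHom Q ∈ S := by
        intro g Q hQ
        constructor
        · exact hQ.1.map _
        · have himg : K ∩ ((Subgroup.map (MulAut.conj g).toMonoidHom Q : Subgroup X) : Set X)
              = (MulAut.conj g).toMonoidHom '' (K ∩ (Q : Set X)) := by
            ext x
            constructor
            · rintro ⟨hxK, q, hq, rfl⟩
              have hq' := hKconj g⁻¹ _ hxK
              have heq : g⁻¹ * ((MulAut.conj g).toMonoidHom q) * g⁻¹⁻¹ = q := by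
                simp [MulAut.conj_apply]; group
              rw [heq] at hq'
              exact ⟨q, ⟨hq', hq⟩, rfl⟩
            · rintro ⟨q, ⟨hqK, hqQ⟩, rfl⟩
              exact ⟨by simpa using hKconj g q hqK, q, hqQ, rfl⟩
          rw [himg, ← MonoidHom.map_closure, hQ.2]
      have hmapmap : ∀ (g : X) (Q : Subgroup X),
          Subgroup.map (MulAut.conj g⁻¹).toMonoidHom
            (Subgroup.map (MulAut.conj g).toMonoidHom Q) = Q := by
        intro g Q
        ext x
        constructor
        · rintro ⟨y, ⟨q, hq, rfl⟩, rfl⟩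
          simpa [mul_assoc] using hq
        · intro hx
          exact ⟨g * x * g⁻¹, ⟨x, hx, rfl⟩, by simp [mul_assoc]⟩
      -- if K is inside some maximal member, we are done; otherwise derive False
      by_cases hKsub : ∃ W, (W ∈ S ∧ ∀ R ∈ S, W ≤ R → W = R) ∧ K ⊆ (W : Set X)
      · obtain ⟨W, ⟨hWS, _⟩, hKW⟩ := hKsub
        exact IsPGroup.to_le hWS.1 ((Subgroup.closure_le _).mpr hKW)
      exfalso
      push_neg at hKsub
      -- there exist two distinct maximal members
      have hpairex : ∃ W₁ W₂ : Subgroup X, (W₁ ∈ S ∧ ∀ R ∈ S, W₁ ≤ R → W₁ = R) ∧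
          (W₂ ∈ S ∧ ∀ R ∈ S, W₂ ≤ R → W₂ = R) ∧ W₁ ≠ W₂ := by
        by_cases hall : ∀ g : X, Subgroup.map (MulAut.conj g).toMonoidHom W₀ = W₀
        · exfalso
          have hWnorm : W₀.Normal := by
            constructor
            intro x hx g
            have : g * x * g⁻¹ ∈ Subgroup.map (MulAut.conj g).toMonoidHom W₀ :=
              ⟨x, hx, rfl⟩
            rwa [hall g] at this
          have := h_nonormal W₀ hWnorm hW₀S.1
          rw [this] at hx₀W₀
          exact hx₀ne (Subgroup.mem_bot.mp hx₀W₀)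
        · push_neg at hall
          obtain ⟨g, hg⟩ := hall
          refine ⟨W₀, Subgroup.map (MulAut.conj g).toMonoidHom W₀,
            ⟨hW₀S, hW₀max⟩, ⟨hconjS g W₀ hW₀S, ?_⟩, fun h => hg h.symm⟩
          intro R hR hle
          have h1 : W₀ ≤ Subgroup.map (MulAut.conj g⁻¹).toMonoidHom R := by
            rw [← hmapmap g W₀]
            exact Subgroup.map_mono hle
          have h2 := hW₀max _ (by simpa using hconjS g⁻¹ R hR) h1
          rw [h2]
          have h3 := hmapmap g⁻¹ R
          rwa [inv_inv] at h3
      obtain ⟨V₁, V₂, hV₁, hV₂, hV₁₂⟩ := hpairex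
      -- maximize the intersection over pairs of distinct maximal members
      set PP : Set (Subgroup X × Subgroup X) :=
        {q | (q.1 ∈ S ∧ ∀ R ∈ S, q.1 ≤ R → q.1 = R) ∧
             (q.2 ∈ S ∧ ∀ R ∈ S, q.2 ≤ R → q.2 = R) ∧ q.1 ≠ q.2} with hPPdef
      have hPPne : PP.Nonempty := ⟨(V₁, V₂), hV₁, hV₂, hV₁₂⟩
      obtain ⟨⟨W₁, W₂⟩, hWPP, hWmaxpair⟩ := Set.Finite.exists_maximalFor
        (fun q : Subgroup X × Subgroup X =>
          Set.ncard {x | x ∈ K ∧ x ∈ q.1 ∧ x ∈ q.2 ∧ x ≠ 1})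
        PP (Set.toFinite _) hPPne
      obtain ⟨⟨hW₁S, hW₁max⟩, ⟨hW₂S, hW₂max⟩, hW₁₂⟩ := hWPP
      set E' : Set X := {x | x ∈ K ∧ x ∈ W₁ ∧ x ∈ W₂ ∧ x ≠ 1} with hE'def
      by_cases hE'em : E' = ∅
      · -- trivial-intersection case
        obtain ⟨x₁, hx₁K, hx₁W, hx₁ne⟩ := hMnontriv W₁ hW₁S hW₁max
        obtain ⟨x₂, hx₂K, hx₂W, hx₂ne⟩ := hMnontriv W₂ hW₂S hW₂max
        have hRS : Subgroup.closure {x₁, x₂} ∈ S := by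
          constructor
          · exact hKpair x₁ hx₁K x₂ hx₂K
          · apply le_antisymm
            · exact (Subgroup.closure_le _).mpr Set.inter_subset_right
            · apply Subgroup.closure_mono  -- {x₁,x₂} ⊆ K ∩ closure {x₁,x₂}
              intro t ht
              rcases ht with h | h
              · subst h; exact ⟨hx₁K, Subgroup.subset_closure (Set.mem_insert _ _)⟩
              · rw [Set.mem_singleton_iff] at h; subst h
                exact ⟨hx₂K, Subgroup.subset_closure (Set.mem_insert_of_mem _ rfl)⟩
        obtain ⟨W₃, hW₃S, hW₃ge, hW₃max⟩ := hmax_above _ hRS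
        have hx₁W₃ : x₁ ∈ W₃ := hW₃ge (Subgroup.subset_closure (Set.mem_insert _ _))
        have hx₂W₃ : x₂ ∈ W₃ := hW₃ge (Subgroup.subset_closure (Set.mem_insert_of_mem _ rfl))
        have hzero : Set.ncard E' = 0 := by rw [hE'em]; exact Set.ncard_empty _
        have hW₃eq : ∀ A : Subgroup X, A ∈ S → (∀ R ∈ S, A ≤ R → A = R) →
            (∃ x, x ∈ K ∧ x ∈ A ∧ x ∈ W₃ ∧ x ≠ 1) → W₃ = A := by
          intro A hAS hAmax ⟨x, hxK, hxA, hxW₃, hxne⟩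
          by_contra hne
          have hPPmem : (A, W₃) ∈ PP := ⟨⟨hAS, hAmax⟩, ⟨hW₃S, hW₃max⟩, fun h => hne h.symm⟩
          have hpos : 0 < Set.ncard {t | t ∈ K ∧ t ∈ A ∧ t ∈ W₃ ∧ t ≠ 1} := by
            rw [Set.ncard_pos (Set.toFinite _)]
            exact ⟨x, hxK, hxA, hxW₃, hxne⟩
          have := hWmaxpair (j := (A, W₃)) hPPmem (by simp only [← hE'def]; omega)
          simp only [← hE'def] at this
          omega
        have h1 := hW₃eq W₁ hW₁S hW₁max ⟨x₁, hx₁K, hx₁W, hx₁W₃, hx₁ne⟩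
        have h2 := hW₃eq W₂ hW₂S hW₂max ⟨x₂, hx₂K, hx₂W, hx₂W₃, hx₂ne⟩
        exact hW₁₂ (h1 ▸ h2)
      · -- nontrivial intersection case
        obtain ⟨u, huE'⟩ := Set.nonempty_iff_ne_empty.mpr hE'em
        set D : Subgroup X := Subgroup.closure E' with hDdef
        have hE'D : E' ⊆ (D : Set X) := Subgroup.subset_closure
        have hDW₁ : D ≤ W₁ := (Subgroup.closure_le _).mpr (fun x hx => hx.2.1)
        have hDW₂ : D ≤ W₂ := (Subgroup.closure_le _).mpr (fun x hx => hx.2.2.1)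
        have hDp : IsPGroup p ↥D := IsPGroup.to_le hW₁S.1 hDW₁
        have hDbot : D ≠ ⊥ := by
          intro h
          have := hE'D huE'
          rw [h] at this
          exact huE'.2.2.2 (Subgroup.mem_bot.mp this)
        have hDKclos : Subgroup.closure (K ∩ (D : Set X)) = D := by
          apply le_antisymm
          · exact (Subgroup.closure_le _).mpr Set.inter_subset_right
          · exact Subgroup.closure_mono (fun x hx => ⟨hx.1, hE'D hx⟩)
        set N : Subgroup X := Subgroup.normalizer (D : Set X) with hNdef
        have hDN : D ≤ N := Subgroup.le_normalizer
        have hNne : N ≠ ⊤ := by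
          intro h
          have hDnorm : D.Normal := Subgroup.normalizer_eq_top_iff.mp h
          exact hDbot (h_nonormal D hDnorm hDp)
        have hNcard : Nat.card ↥N ≤ n := by
          have hle : Nat.card ↥N ≤ Nat.card X :=
            Nat.card_le_card_of_injective _ N.subtype_injective
          rcases hle.lt_or_eq with h | h
          · omega
          · exact absurd (Subgroup.eq_top_of_card_eq N h) hNne
        -- closure of K ∩ N is a p-group by induction
        set KN : Set ↥N := {y : ↥N | (y : X) ∈ K} with hKNdef
        have hVNp : IsPGroup p ↥(Subgroup.closure KN) := by
          apply IH ↥N inferInstance inferInstance hNcard p hp KN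
          · intro g y hy
            exact hKconj (g : X) (y : X) hy
          · intro x hx y hy
            have hmapeq : (Subgroup.closure {x, y}).map N.subtype
                = Subgroup.closure {(x : X), (y : X)} := by
              rw [MonoidHom.map_closure, Set.image_pair]; rfl
            have : IsPGroup p ↥((Subgroup.closure {x, y}).map N.subtype) := by
              rw [hmapeq]; exact hKpair _ hx _ hy
            exact this.of_equiv
              (Subgroup.equivMapOfInjective _ _ N.subtype_injective).symm
        set V : Subgroup X := (Subgroup.closure KN).map N.subtype with hVdef
        have hVp : IsPGroup p ↥V := hVNp.map _
        have hVeq : V = Subgroup.closure (K ∩ (N : Set X)) := by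
          rw [hVdef, MonoidHom.map_closure]
          congr 1
          ext x
          constructor
          · rintro ⟨⟨y, hyN⟩, hyK, rfl⟩
            exact ⟨hyK, hyN⟩
          · rintro ⟨hxK, hxN⟩
            exact ⟨⟨x, hxN⟩, hxK, rfl⟩
        have hKNV : K ∩ (N : Set X) ⊆ (V : Set X) := by
          rw [hVeq]; exact Subgroup.subset_closure
        have hVS : V ∈ S := by
          constructor
          · exact hVp
          · apply le_antisymm
            · exact (Subgroup.closure_le _).mpr Set.inter_subset_right
            · conv_lhs => rw [hVeq]
              exact Subgroup.closure_mono (fun x hx => ⟨hx.1, hKNV hx⟩)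
        obtain ⟨W₃, hW₃S, hW₃ge, hW₃max⟩ := hmax_above _ hVS
        have hE'W₃ : E' ⊆ (W₃ : Set X) := by
          intro x hx
          exact hW₃ge (hKNV ⟨hx.1, hDN (hE'D hx)⟩)
        -- key step using the normalizer lemma
        have keystep : ∀ A B : Subgroup X, A ∈ S → (∀ R ∈ S, A ≤ R → A = R) →
            B ∈ S → (∀ R ∈ S, B ≤ R → B = R) → A ≠ B → D ≤ A → D ≤ B →
            E' ⊆ (A : Set X) → W₃ = A := by
          intro A B hAS hAmax hBS hBmax hAB hDA hDB hE'A
          -- apply the normalizer lemma inside A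
          set YA : Set ↥A := {y : ↥A | (y : X) ∈ K} with hYAdef
          set DA : Subgroup ↥A := D.subgroupOf A with hDAdef
          have hclosA : Subgroup.closure (YA ∩ (DA : Set ↥A)) = DA := by
            apply Subgroup.map_injective A.subtype_injective
            rw [MonoidHom.map_closure]
            have himg : (A.subtype '' (YA ∩ (DA : Set ↥A))) = K ∩ (D : Set X) := by
              ext x
              constructor
              · rintro ⟨⟨x, hxA⟩, ⟨hxY, hxD⟩, rfl⟩
                exact ⟨hxY, hxD⟩
              · rintro ⟨hxK, hxD⟩
                exact ⟨⟨x, hDA hxD⟩, ⟨hxK, Subgroup.mem_subgroupOf.mpr hxD⟩, rfl⟩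
            rw [himg, hDKclos, Subgroup.subgroupOf_map_subtype, inf_eq_left.mpr hDA]
          have hnsubA : ¬ YA ⊆ (DA : Set ↥A) := by
            intro hsub
            have hAD : A ≤ D := by
              conv_lhs => rw [← hAS.2]
              apply (Subgroup.closure_le _).mpr
              intro x hx
              exact Subgroup.mem_subgroupOf.mp (hsub (show (⟨x, hx.2⟩ : ↥A) ∈ YA from hx.1))
            exact hAB (hAmax B hBS (hAD.trans hDB))
          obtain ⟨y', hy'K, hy'D, hy'norm⟩ :=
            key_normalizer_lemma (Nat.card ↥A) ↥A inferInstance inferInstance le_rfl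
              p hp hAS.1 YA (fun w y hy => hKconj (w : X) (y : X) hy) DA hclosA hnsubA
          set y₁ : X := (y' : X) with hy₁def
          have hy₁D : y₁ ∉ D := fun h => hy'D (Subgroup.mem_subgroupOf.mpr h)
          have hy₁N : y₁ ∈ N := by
            apply Subgroup.mem_normalizer_fintype
            intro d hd
            have := hy'norm ⟨d, hDA hd⟩ (Subgroup.mem_subgroupOf.mpr hd)
            exact Subgroup.mem_subgroupOf.mp this
          have hy₁W₃ : y₁ ∈ W₃ := hW₃ge (hKNV ⟨hy'K, hy₁N⟩)
          have hy₁A : y₁ ∈ A := y'.2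
          have hy₁ne : y₁ ≠ 1 := fun h => hy₁D (h ▸ D.one_mem)
          by_contra hne
          have hPPmem : (A, W₃) ∈ PP := ⟨⟨hAS, hAmax⟩, ⟨hW₃S, hW₃max⟩, fun h => hne h.symm⟩
          have hsubins : insert y₁ E' ⊆ {x | x ∈ K ∧ x ∈ A ∧ x ∈ W₃ ∧ x ≠ 1} := by
            rintro x (rfl | hx)
            · exact ⟨hy'K, hy₁A, hy₁W₃, hy₁ne⟩
            · exact ⟨hx.1, hE'A hx, hE'W₃ hx, hx.2.2.2⟩
          have hy₁E' : y₁ ∉ E' := fun h => hy₁D (hE'D h)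
          have hcard2 : Set.ncard E' + 1 ≤ Set.ncard {x | x ∈ K ∧ x ∈ A ∧ x ∈ W₃ ∧ x ≠ 1} := by
            rw [← Set.ncard_insert_of_notMem hy₁E' (Set.toFinite _)]
            exact Set.ncard_le_ncard hsubins (Set.toFinite _)
          have := hWmaxpair (j := (A, W₃)) hPPmem (by simp only [← hE'def]; omega)
          simp only [← hE'def] at this
          omega
        have h1 := keystep W₁ W₂ hW₁S hW₁max hW₂S hW₂max hW₁₂ hDW₁ hDW₂
          (fun x hx => hx.2.1)
        have h2 := keystep W₂ W₁ hW₂S hW₂max hW₁S hW₁max (fun h => hW₁₂ h.symm) hDW₂ hDW₁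
          (fun x hx => hx.2.2.1)
        exact hW₁₂ (h1 ▸ h2)

private lemma dihedral_pgroup {G : Type u} [Group G] [Finite G] {x y : G}
    (hx : x ^ 2 = 1) (hy : y ^ 2 = 1) (hs : ∃ s : ℕ, orderOf (x * y) = 2 ^ s) :
    IsPGroup 2 ↥(Subgroup.closure {x, y}) := by
  obtain ⟨s, hs⟩ := hs
  haveI : Fact (Nat.Prime 2) := ⟨Nat.prime_two⟩
  set N := Subgroup.zpowers (x * y) with hN
  have hNp : IsPGroup 2 ↥N := IsPGroup.of_card (by rw [Nat.card_zpowers, hs])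
  have hxx : x * x = 1 := by rw [← pow_two]; exact hx
  have hyy : y * y = 1 := by rw [← pow_two]; exact hy
  have hxinv : x⁻¹ = x := by rw [← mul_one x⁻¹, ← hxx]; group
  have hyinv : y⁻¹ = y := by rw [← mul_one y⁻¹, ← hyy]; group
  have hconj : x * (x * y) * x⁻¹ = (x * y)⁻¹ := by
    rw [hxinv, mul_inv_rev, hxinv, hyinv]
    calc x * (x * y) * x = (x * x) * (y * x) := by group
      _ = y * x := by rw [hxx, one_mul]
  have hxN : ∀ t ∈ N, x * t * x⁻¹ ∈ N := by
    intro t ht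
    obtain ⟨k, hk⟩ := Subgroup.mem_zpowers_iff.mp ht
    rw [← hk]
    have h1 : x * (x * y) ^ k * x⁻¹ = (x * (x * y) * x⁻¹) ^ k := by rw [conj_zpow]
    rw [h1, hconj]
    exact Subgroup.mem_zpowers_iff.mpr ⟨-k, by rw [zpow_neg, inv_zpow]⟩
  have hxp : IsPGroup 2 ↥(Subgroup.zpowers x) := by
    have hdvd : orderOf x ∣ 2 := orderOf_dvd_of_pow_eq_one hx
    rcases (Nat.dvd_prime Nat.prime_two).mp hdvd with h | h
    · exact IsPGroup.of_card (n := 0) (by rw [Nat.card_zpowers, h]; rfl)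
    · exact IsPGroup.of_card (n := 1) (by rw [Nat.card_zpowers, h]; rfl)
  have hxnorm : Subgroup.zpowers x ≤ Subgroup.normalizer (N : Set G) := by
    rw [Subgroup.zpowers_le]
    exact Subgroup.mem_normalizer_fintype (fun t ht => hxN t ht)
  have hsup : IsPGroup 2 ↥(Subgroup.zpowers x ⊔ N) :=
    IsPGroup.to_sup_of_normal_right' hxp hNp hxnorm
  have hle : Subgroup.closure {x, y} ≤ Subgroup.zpowers x ⊔ N := by
    apply (Subgroup.closure_le _).mpr
    rintro t (rfl | ht)
    · exact Subgroup.mem_sup_left (Subgroup.mem_zpowers _)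
    · rw [Set.mem_singleton_iff] at ht
      have hyx : y = x * (x * y) := by rw [← mul_assoc, hxx, one_mul]
      rw [ht, hyx]
      exact Subgroup.mul_mem _ (Subgroup.mem_sup_left (Subgroup.mem_zpowers _))
        (Subgroup.mem_sup_right (Subgroup.mem_zpowers _))
  exact IsPGroup.to_le hsup hle

theorem baer_suzuki_application (G : Type*) [Group G] [Finite G]
    (hperf : commutator G = ⊤) (hsimple : IsSimpleGroup (G ⧸ Subgroup.center G))
    (a : G) (ha2 : ∃ n : ℕ, orderOf a = 2 ^ n)
    (hnz : a ∉ Subgroup.center G) (hsq : a ^ 2 ∈ Subgroup.center G) :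
    ∃ t : G, Odd (orderOf ⁅a, t⁆) ∧ ⁅a, t⁆ ≠ 1 := by
  classical
  haveI : Fact (Nat.Prime 2) := ⟨Nat.prime_two⟩
  by_cases hall : ∀ g : G, ∃ s : ℕ, orderOf ⁅a, g⁆ = 2 ^ s
  · -- all commutators with a are 2-elements: derive a contradiction
    exfalso
    set π := QuotientGroup.mk' (Subgroup.center G) with hπdef
    have hπsurj : Function.Surjective π := QuotientGroup.mk'_surjective _
    set abar := π a with habardef
    have habar1 : abar ≠ 1 := fun h => hnz ((QuotientGroup.eq_one_iff a).mp h)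
    have habar2 : abar ^ 2 = 1 := by
      rw [habardef, ← map_pow]
      exact (QuotientGroup.eq_one_iff (a ^ 2)).mpr hsq
    have horderconj : ∀ (h x : G ⧸ Subgroup.center G),
        orderOf (h * x * h⁻¹) = orderOf x := by
      intro h x
      have := orderOf_injective (MulAut.conj h).toMonoidHom (MulAut.conj h).injective x
      simpa [MulAut.conj_apply] using this
    -- products of `abar` with its conjugates have 2-power order
    have hprod : ∀ q : G ⧸ Subgroup.center G,
        ∃ s : ℕ, orderOf (abar * (q * abar * q⁻¹)) = 2 ^ s := by
      intro q
      obtain ⟨h, rfl⟩ := hπsurj q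
      obtain ⟨s, hs⟩ := hall h
      have hgrp : a * (h * a * h⁻¹) = ⁅a, h⁆ * (h * a ^ 2 * h⁻¹) := by
        rw [commutatorElement_def]; group
      have hπeq : abar * (π h * abar * (π h)⁻¹) = π ⁅a, h⁆ := by
        calc abar * (π h * abar * (π h)⁻¹) = π (a * (h * a * h⁻¹)) := by
              rw [habardef]; simp only [map_mul, map_inv]
          _ = π (⁅a, h⁆ * (h * a ^ 2 * h⁻¹)) := by rw [hgrp]
          _ = π ⁅a, h⁆ * (π h * π (a ^ 2) * (π h)⁻¹) := by simp [map_mul, map_inv]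
          _ = π ⁅a, h⁆ := by
              have h0 : π (a ^ 2) = 1 := (QuotientGroup.eq_one_iff (a ^ 2)).mpr hsq
              rw [h0]; simp
      rw [hπeq]
      have hdvd : orderOf (π ⁅a, h⁆) ∣ 2 ^ s := by
        rw [← hs]; exact orderOf_map_dvd π _
      obtain ⟨j, _, hj2⟩ := (Nat.dvd_prime_pow Nat.prime_two).mp hdvd
      exact ⟨j, hj2⟩
    set K : Set (G ⧸ Subgroup.center G) := {x | ∃ h, h * abar * h⁻¹ = x} with hKdef
    have habarK : abar ∈ K := ⟨1, by group⟩
    have hKconj : ∀ (g x : G ⧸ Subgroup.center G), x ∈ K → g * x * g⁻¹ ∈ K := by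
      rintro g x ⟨h, rfl⟩
      exact ⟨g * h, by group⟩
    have hKinv : ∀ x ∈ K, x ^ 2 = 1 ∧ x ≠ 1 := by
      rintro x ⟨h, rfl⟩
      constructor
      · have : (h * abar * h⁻¹) ^ 2 = h * abar ^ 2 * h⁻¹ := by rw [conj_pow]
        rw [this, habar2]; group
      · intro hx1
        apply habar1
        have : abar = h⁻¹ * (h * abar * h⁻¹) * h := by group
        rw [this, hx1]; group
    have hKpair : ∀ x ∈ K, ∀ y ∈ K, IsPGroup 2 ↥(Subgroup.closure {x, y}) := by
      intro x hx y hy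
      obtain ⟨hx2, _⟩ := hKinv x hx
      obtain ⟨hy2, _⟩ := hKinv y hy
      apply dihedral_pgroup hx2 hy2
      obtain ⟨h, rfl⟩ := hx
      obtain ⟨h', rfl⟩ := hy
      obtain ⟨s, hs⟩ := hprod (h⁻¹ * h')
      refine ⟨s, ?_⟩
      have hconjform : (h * abar * h⁻¹) * (h' * abar * h'⁻¹)
          = h * (abar * ((h⁻¹ * h') * abar * (h⁻¹ * h')⁻¹)) * h⁻¹ := by group
      rw [hconjform, horderconj, hs]
    have hclosK : IsPGroup 2 ↥(Subgroup.closure K) :=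
      baer_suzuki_aux (Nat.card (G ⧸ Subgroup.center G)) (G ⧸ Subgroup.center G)
        inferInstance inferInstance le_rfl 2 ⟨Nat.prime_two⟩ K hKconj hKpair
    have hKnormal : (Subgroup.closure K).Normal := by
      constructor
      intro x hx g
      have h1 : (MulAut.conj g).toMonoidHom x
          ∈ (Subgroup.closure K).map (MulAut.conj g).toMonoidHom := ⟨x, hx, rfl⟩
      rw [MonoidHom.map_closure] at h1
      have himg : (MulAut.conj g).toMonoidHom '' K = K := by
        ext t
        constructor
        · rintro ⟨u, hu, rfl⟩
          have := hKconj g u hu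
          simpa [MulAut.conj_apply] using this
        · intro ht
          refine ⟨g⁻¹ * t * g, ?_, by simp [MulAut.conj_apply]; group⟩
          have := hKconj g⁻¹ t ht
          simpa using this
      rw [himg] at h1
      simpa [MulAut.conj_apply] using h1
    haveI := hKnormal
    rcases hsimple.eq_bot_or_eq_top_of_normal (Subgroup.closure K) hKnormal with hbot | htop
    · have : abar ∈ (⊥ : Subgroup (G ⧸ Subgroup.center G)) :=
        hbot ▸ Subgroup.subset_closure habarK
      exact habar1 (Subgroup.mem_bot.mp this)
    · -- the quotient is a 2-group, hence has nontrivial center, hence abelian, etc.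
      have hQ2 : IsPGroup 2 (G ⧸ Subgroup.center G) := by
        intro q
        have hq : q ∈ Subgroup.closure K := htop ▸ Subgroup.mem_top q
        obtain ⟨k, hk⟩ := hclosK ⟨q, hq⟩
        exact ⟨k, by simpa using congrArg Subtype.val hk⟩
      haveI : Nontrivial (G ⧸ Subgroup.center G) := ⟨abar, 1, habar1⟩
      haveI := hQ2.center_nontrivial
      have hcen : Subgroup.center (G ⧸ Subgroup.center G) = ⊤ := by
        rcases hsimple.eq_bot_or_eq_top_of_normal (Subgroup.center _)
            (inferInstance) with h | h
        · exfalso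
          obtain ⟨z, hz⟩ := exists_ne (1 : ↥(Subgroup.center (G ⧸ Subgroup.center G)))
          apply hz
          have h2 : (z : G ⧸ Subgroup.center G) ∈ (⊥ : Subgroup _) := by
            rw [← h]; exact z.2
          exact Subtype.ext (Subgroup.mem_bot.mp h2)
        · exact h
      have hcommbot : commutator (G ⧸ Subgroup.center G) = ⊥ := by
        rw [_root_.commutator_def]
        apply le_bot_iff.mp
        apply Subgroup.commutator_le.mpr
        intro g₁ _ g₂ _
        have hcomm : g₁ * g₂ = g₂ * g₁ :=
          (Subgroup.mem_center_iff.mp (hcen ▸ Subgroup.mem_top g₂) g₁)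
        rw [Subgroup.mem_bot, commutatorElement_def]
        rw [show g₁ * g₂ * g₁⁻¹ * g₂⁻¹ = (g₁ * g₂) * (g₂ * g₁)⁻¹ by group, hcomm]
        group
      have hcommtop : commutator (G ⧸ Subgroup.center G) = ⊤ := by
        have hmap : Subgroup.map π (commutator G) = commutator (G ⧸ Subgroup.center G) := by
          rw [_root_.commutator_def, _root_.commutator_def, Subgroup.map_commutator,
            Subgroup.map_top_of_surjective π hπsurj]
        rw [← hmap, hperf, Subgroup.map_top_of_surjective π hπsurj]
      rw [hcommbot] at hcommtop
      have : abar ∈ (⊥ : Subgroup (G ⧸ Subgroup.center G)) :=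
        hcommtop ▸ Subgroup.mem_top abar
      exact habar1 (Subgroup.mem_bot.mp this)
  · -- some commutator has non-2-power order: construct t explicitly
    push_neg at hall
    obtain ⟨g, hg⟩ := hall
    have hinv : a * ⁅a, g⁆ * a⁻¹ = ⁅a, g⁆⁻¹ := by
      have h : g * a ^ 2 = a ^ 2 * g := Subgroup.mem_center_iff.mp hsq g
      have h1 : a * ⁅a, g⁆ * a⁻¹ = a ^ 2 * g * a⁻¹ * g⁻¹ * a⁻¹ := by
        rw [commutatorElement_def, pow_two]; group
      rw [h1, ← h, commutatorElement_def]
      group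
    set c := ⁅a, g⁆ with hcdef
    set n₀ := orderOf c with hn₀def
    have hn₀pos : 0 < n₀ := orderOf_pos c
    set k := n₀.factorization 2 with hkdef
    set m := n₀ / 2 ^ k with hmdef
    have hdvd : 2 ^ k ∣ n₀ := Nat.ordProj_dvd n₀ 2
    have hmul : 2 ^ k * m = n₀ := Nat.ordProj_mul_ordCompl_eq_self n₀ 2
    have hmodd : ¬ 2 ∣ m := Nat.not_dvd_ordCompl Nat.prime_two hn₀pos.ne'
    have hm1 : m ≠ 1 := by
      intro h
      rw [h, mul_one] at hmul
      exact hg k hmul.symm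
    set d := c ^ 2 ^ k with hddef
    have hod : orderOf d = m := by
      rw [hddef, orderOf_pow, ← hn₀def, Nat.gcd_eq_right hdvd, hmdef]
    have hinvd : a * d * a⁻¹ = d⁻¹ := by
      rw [hddef]
      have h1 : a * c ^ 2 ^ k * a⁻¹ = (a * c * a⁻¹) ^ 2 ^ k := by rw [conj_pow]
      rw [h1, hinv, inv_pow]
    have hcom2 : ⁅a, d⁆ = (d ^ 2)⁻¹ := by
      rw [commutatorElement_def,
        show a * d * a⁻¹ * d⁻¹ = (a * d * a⁻¹) * d⁻¹ by group, hinvd]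
      group
    have hgcd : Nat.gcd m 2 = 1 :=
      (Nat.Coprime.symm ((Nat.Prime.coprime_iff_not_dvd Nat.prime_two).mpr hmodd))
    have hord2 : orderOf ⁅a, d⁆ = m := by
      rw [hcom2, orderOf_inv, orderOf_pow, hod, hgcd, Nat.div_one]
    refine ⟨d, ?_, ?_⟩
    · rw [hord2]
      rcases Nat.mod_two_eq_zero_or_one m with h | h
      · exact absurd (Nat.dvd_of_mod_eq_zero h) hmodd
      · exact Nat.odd_iff.mpr h
    · intro h
      have : orderOf ⁅a, d⁆ = 1 := by rw [h]; exact orderOf_one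
      rw [hord2] at this
      exact hm1 this
end

section
/- Let G be a finite group with G = G' and suppose the commutator subgroup of G/T is a q-group for a prime q, where T is a proper or improper subgroup of G containing, for every prime p ≠ q, all Sylow p-subgroups of G'. Then G = T. -/
theorem perfect_eq_of_quotient_derived_q_group (G : Type*) [Group G] [Finite G]
    (hperf : commutator G = ⊤) (q : ℕ) (hq : q.Prime)
    (T : Subgroup G) [hT : T.Normal]
    (hTsyl : ∀ p : ℕ, ∀ _ : Fact p.Prime, p ≠ q →
      ∀ P : Sylow p (commutator G),
        Subgroup.map (commutator G).subtype (P : Subgroup (commutator G)) ≤ T)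
    (hquot : IsPGroup q (commutator (G ⧸ T))) :
    T = ⊤ := by
  haveI : Fact q.Prime := ⟨hq⟩
  -- commutator of G⧸T is ⊤ since G is perfect
  have hsurj : Function.Surjective (QuotientGroup.mk' T) := QuotientGroup.mk'_surjective T
  have hcomm : commutator (G ⧸ T) = ⊤ := by
    have := Subgroup.map_commutator (f := QuotientGroup.mk' T) (H₁ := (⊤ : Subgroup G))
      (H₂ := (⊤ : Subgroup G))
    rw [← commutator_def, hperf, Subgroup.map_top_of_surjective _ hsurj] at this
    rw [commutator_def, ← this]
  -- so G⧸T is a q-group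
  have hqg : IsPGroup q (G ⧸ T) := by
    rw [hcomm] at hquot
    exact hquot.of_equiv Subgroup.topEquiv
  -- a finite q-group is nilpotent
  haveI := hqg.isNilpotent
  -- nilpotent + perfect ⇒ trivial
  obtain ⟨n, hn⟩ := nilpotent_iff_lowerCentralSeries.mp ‹Group.IsNilpotent (G ⧸ T)›
  have hder : ∀ m, derivedSeries (G ⧸ T) m = ⊤ := by
    intro m
    induction m with
    | zero => rfl
    | succ k ih => rw [derivedSeries_succ, ih, ← commutator_def, hcomm]
  have htb : (⊤ : Subgroup (G ⧸ T)) ≤ ⊥ := (hder n) ▸ (derived_le_lower_central n).trans hn.le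
  haveI : Subsingleton (G ⧸ T) := by
    constructor
    intro a b
    have ha : a ∈ (⊥ : Subgroup (G ⧸ T)) := htb trivial
    have hb : b ∈ (⊥ : Subgroup (G ⧸ T)) := htb trivial
    rw [Subgroup.mem_bot] at ha hb
    rw [ha, hb]
  exact QuotientGroup.subgroup_eq_top_of_subsingleton T ‹_›
end
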